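/- arXiv:2503.15097 — 2 statements merged into one kernel-verified Lean document; each statement's English description precedes it below -/
import Mathlib

section
/- For every real number x there exist real numbers u and v such that x = u + v and every NICF digit a_i of u with i ≥ 1 satisfies |a_i| ≤ 5, and every NICF digit a_i of v with i ≥ 1 satisfies |a_i| ≤ 5 (that is, ℝ = NICF_5 + NICF_5). -/
open Filter Pointwise

/-- NICF iterates: `x₀ = x`, `x_{i+1} = 1/(x_i - ⌊x_i⌉)`, with `⌊t⌉ = round t = ⌊t + 1/2⌋`. -/
noncomputable def nicfX (x : ℝ) : ℕ → ℝ
  | 0 => x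
  | n + 1 => 1 / (nicfX x n - round (nicfX x n))

/-- The `i`-th NICF digit of `x`. -/
noncomputable def nicfDigit (x : ℝ) (i : ℕ) : ℤ := round (nicfX x i)

/-- The `i`-th NICF digit is genuinely defined: the algorithm has not terminated before
step `i` (i.e. `x_m ≠ a_m` for all `m < i`). -/
def nicfDefined (x : ℝ) (i : ℕ) : Prop :=
  ∀ m, m < i → nicfX x m ≠ (nicfDigit x m : ℝ)

/-- `NICFset r`: the reals all of whose NICF digits `a_i` with `i ≥ 1` satisfy `|a_i| ≤ r`. -/
def NICFset (r : ℤ) : Set ℝ :=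
  {x | ∀ i : ℕ, 1 ≤ i → nicfDefined x i → |nicfDigit x i| ≤ r}

namespace NICF5
noncomputable def rt : ℝ := Real.sqrt 21
lemma rt_sq : rt * rt = 21 := Real.mul_self_sqrt (by norm_num)
lemma rt_nn : 0 ≤ rt := Real.sqrt_nonneg 21
lemma rt_lb : 4.5825 < rt := by nlinarith [rt_sq, rt_nn]
lemma rt_ub : rt < 4.5826 := by nlinarith [rt_sq, rt_nn]
noncomputable def a0 : ℝ := (5 - rt)/2
noncomputable def b0 : ℝ := (rt - 3)/2
noncomputable def a1 : ℝ := (rt - 3)/6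
noncomputable def q2 : ℝ := (9 + rt)/30
noncomputable def q3 : ℝ := (11 + rt)/50
noncomputable def q4 : ℝ := (13 + rt)/74
noncomputable def p1 : ℝ := (rt + 1)/10
noncomputable def p2 : ℝ := (rt - 1)/10
noncomputable def d1lo : ℝ := (11 - rt)/10
noncomputable def d1hi : ℝ := (39 - rt)/50
noncomputable def d2lo : ℝ := (21 - rt)/42
noncomputable def d2hi : ℝ := (69 - rt)/158
noncomputable def d3lo : ℝ := (31 - rt)/94
noncomputable def d3hi : ℝ := (99 - rt)/326
noncomputable def d4lo : ℝ := (41 - rt)/166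
noncomputable def d4hi : ℝ := (129 - rt)/554

-- ordering chain
lemma h_a0 : 0 < a0 := by unfold a0; linarith [rt_lb, rt_ub]
lemma h_a0q4 : a0 < q4 := by unfold a0 q4; linarith [rt_lb, rt_ub]
lemma h_q4a1 : q4 < a1 := by unfold q4 a1; linarith [rt_lb, rt_ub]
lemma h_a1q3 : a1 < q3 := by unfold a1 q3; linarith [rt_lb, rt_ub]
lemma h_q3p2 : q3 < p2 := by unfold q3 p2; linarith [rt_lb, rt_ub]
lemma h_p2q2 : p2 < q2 := by unfold p2 q2; linarith [rt_lb, rt_ub]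
lemma h_q2p1 : q2 < p1 := by unfold q2 p1; linarith [rt_lb, rt_ub]
lemma h_p1b0 : p1 < b0 := by unfold p1 b0; linarith [rt_lb, rt_ub]
lemma h_b01 : b0 < 1 := by unfold b0; linarith [rt_lb, rt_ub]
-- d-constants ordering facts
lemma h_d1 : d1lo < d1hi := by unfold d1lo d1hi; linarith [rt_lb, rt_ub]
lemma h_d2 : d2lo < d2hi := by unfold d2lo d2hi; linarith [rt_lb, rt_ub]
lemma h_d3 : d3lo < d3hi := by unfold d3lo d3hi; linarith [rt_lb, rt_ub]
lemma h_d4 : d4lo < d4hi := by unfold d4lo d4hi; linarith [rt_lb, rt_ub]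
-- τL scalar facts
lemma tL1 : p1 - q2 ≤ q2 - a0 := by unfold p1 q2 a0; linarith [rt_lb, rt_ub]
lemma tL2 : p2 - q3 ≤ q3 - a0 := by unfold p2 q3 a0; linarith [rt_lb, rt_ub]
lemma tL3 : a1 - q4 ≤ q4 - a0 := by unfold a1 q4 a0; linarith [rt_lb, rt_ub]
lemma tL4 : p1 - q2 ≤ q2 - a1 := by unfold p1 q2 a1; linarith [rt_lb, rt_ub]
lemma tL5 : p2 - q3 ≤ q3 - a1 := by unfold p2 q3 a1; linarith [rt_lb, rt_ub]
-- τR scalar facts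
lemma tR1a : p1 - q2 ≤ b0 - p1 := by unfold p1 q2 b0; linarith [rt_lb, rt_ub]
lemma tR1b : (p1 - q2) * b0 ≤ (b0 - p1) * q2 := by
  unfold p1 q2 b0; nlinarith [rt_sq, rt_lb, rt_ub]
lemma tR2a : p2 - q3 ≤ q2 - p2 := by unfold p2 q3 q2; linarith [rt_lb, rt_ub]
lemma tR2b : (p2 - q3) * q2 ≤ (q2 - p2) * q3 := by
  unfold p2 q3 q2; nlinarith [rt_sq, rt_lb, rt_ub]
lemma tR3a : a1 - q4 ≤ q3 - a1 := by unfold a1 q4 q3; linarith [rt_lb, rt_ub]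
lemma tR3b : (a1 - q4) * q3 ≤ (q3 - a1) * q4 := by
  unfold a1 q4 q3; nlinarith [rt_sq, rt_lb, rt_ub]
-- chain scalars (cubics)
lemma cC1 : (p2 - q3) * ((q2+1)*(p1+1)) ≤ (p1 - q2) * ((q3+1)*(p2+1)) := by
  unfold p1 p2 q2 q3; nlinarith [rt_sq, rt_lb, rt_ub]
lemma cC2 : (a1 - q4) * ((q3+1)*(p2+1)) ≤ (p2 - q3) * ((q4+1)*(a1+1)) := by
  unfold a1 q4 q3 p2; nlinarith [rt_sq, rt_lb, rt_ub]
lemma cC3 : (d4hi - d4lo) * ((q4+1)*(a1+1)) ≤ (a1 - q4) * ((d4lo+1)*(d4hi+1)) := by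
  unfold a1 q4 d4lo d4hi; nlinarith [rt_sq, rt_lb, rt_ub]
lemma cC4 : (d3hi - d3lo) * ((q3+1)*(p2+1)) ≤ (p2 - q3) * ((d3lo+1)*(d3hi+1)) := by
  unfold q3 p2 d3lo d3hi; nlinarith [rt_sq, rt_lb, rt_ub]
-- D-facts (linear)
lemma dD1a : q2 ≤ d1lo := by unfold q2 d1lo; linarith [rt_lb, rt_ub]
lemma dD1b : p1 ≤ d1hi := by unfold p1 d1hi; linarith [rt_lb, rt_ub]
lemma dD1c : d1hi - d1lo ≤ p1 - q2 := by unfold d1lo d1hi p1 q2; linarith [rt_ub, rt_lb]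
lemma dD2a : q3 ≤ d2lo := by unfold q3 d2lo; linarith [rt_lb, rt_ub]
lemma dD2b : p2 ≤ d2hi := by unfold p2 d2hi; linarith [rt_lb, rt_ub]
lemma dD2c : d2hi - d2lo ≤ p2 - q3 := by unfold d2lo d2hi p2 q3; linarith [rt_ub, rt_lb]
lemma dD3a : q4 ≤ d3lo := by unfold q4 d3lo; linarith [rt_lb, rt_ub]
lemma dD3b : a1 ≤ d3hi := by unfold a1 d3hi; linarith [rt_lb, rt_ub]
lemma dD3c : d3hi - d3lo ≤ a1 - q4 := by unfold d3lo d3hi a1 q4; linarith [rt_ub, rt_lb]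
lemma cC3a : d4lo ≤ q4 := by unfold d4lo q4; linarith [rt_lb, rt_ub]
lemma cC3b : d4hi ≤ a1 := by unfold d4hi a1; linarith [rt_lb, rt_ub]
lemma cC4a : d3lo ≤ q3 := by unfold d3lo q3; linarith [rt_lb, rt_ub]
lemma cC4b : d3hi ≤ p2 := by unfold d3hi p2; linarith [rt_lb, rt_ub]
-- halving scalars
lemma hH1 : 2*(b0 - p1)*(1+b0) ≤ (b0 - a0)*(1+b0) := by
  unfold b0 p1 a0; nlinarith [rt_sq, rt_lb, rt_ub]
lemma hH2 : 2*(q2 - p2)*(1+b0) ≤ (b0 - a0)*(1+q2) := by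
  unfold q2 p2 b0 a0; nlinarith [rt_sq, rt_lb, rt_ub]
lemma hH3 : 2*(q3 - a1)*(1+b0) ≤ (b0 - a0)*(1+q3) := by
  unfold q3 a1 b0 a0; nlinarith [rt_sq, rt_lb, rt_ub]
lemma hH4 : 2*(q4 - a0)*(1+b0) ≤ (b0 - a0)*(1+q4) := by
  unfold q4 a0 b0; nlinarith [rt_sq, rt_lb, rt_ub]
lemma hH5 : 2*(b0 - p1)*(1+b0) ≤ (b0 - a1)*(1+b0) := by
  unfold b0 p1 a1; nlinarith [rt_sq, rt_lb, rt_ub]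
lemma hH6 : 2*(q2 - p2)*(1+b0) ≤ (b0 - a1)*(1+q2) := by
  unfold q2 p2 b0 a1; nlinarith [rt_sq, rt_lb, rt_ub]
lemma hH7 : 2*(q3 - a1)*(1+b0) ≤ (b0 - a1)*(1+q3) := by
  unfold q3 a1 b0; nlinarith [rt_sq, rt_lb, rt_ub]

-- identities
lemma id11 : 1/(1 + a1) = b0 := by
  unfold a1 b0; rw [div_eq_iff (by nlinarith [rt_lb])]; linear_combination (-1/12) * rt_sq
lemma id12 : 1/(1 + b0) = p1 := by
  unfold b0 p1; rw [div_eq_iff (by nlinarith [rt_lb])]; linear_combination (-1/20) * rt_sq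
lemma id23 : 1/(2 + a0) = q2 := by
  unfold a0 q2; rw [div_eq_iff (by nlinarith [rt_lb, rt_ub])]; linear_combination (1/60) * rt_sq
lemma id24 : 1/(2 + b0) = p2 := by
  unfold b0 p2; rw [div_eq_iff (by nlinarith [rt_lb])]; linear_combination (-1/20) * rt_sq
lemma id35 : 1/(3 + a0) = q3 := by
  unfold a0 q3; rw [div_eq_iff (by nlinarith [rt_lb, rt_ub])]; linear_combination (1/100) * rt_sq
lemma id36 : 1/(3 + b0) = a1 := by
  unfold b0 a1; rw [div_eq_iff (by nlinarith [rt_lb])]; linear_combination (-1/12) * rt_sq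
lemma id47 : 1/(4 + a0) = q4 := by
  unfold a0 q4; rw [div_eq_iff (by nlinarith [rt_lb, rt_ub])]; linear_combination (1/148) * rt_sq
lemma id48 : 1/(4 + b0) = a0 := by
  unfold b0 a0; rw [div_eq_iff (by nlinarith [rt_lb])]; linear_combination (1/4) * rt_sq

lemma idd1lo : 1/(1 + p1) = d1lo := by
  unfold p1 d1lo; rw [div_eq_iff (by nlinarith [rt_lb])]; linear_combination (1/100) * rt_sq
lemma idd1hi : 1/(1 + q2) = d1hi := by
  unfold q2 d1hi; rw [div_eq_iff (by nlinarith [rt_lb])]; linear_combination (1/1500) * rt_sq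
lemma idd2lo : 1/(2 + p1) = d2lo := by
  unfold p1 d2lo; rw [div_eq_iff (by nlinarith [rt_lb])]; linear_combination (1/420) * rt_sq
lemma idd2hi : 1/(2 + q2) = d2hi := by
  unfold q2 d2hi; rw [div_eq_iff (by nlinarith [rt_lb])]; linear_combination (1/4740) * rt_sq
lemma idd3lo : 1/(3 + p1) = d3lo := by
  unfold p1 d3lo; rw [div_eq_iff (by nlinarith [rt_lb])]; linear_combination (1/940) * rt_sq
lemma idd3hi : 1/(3 + q2) = d3hi := by
  unfold q2 d3hi; rw [div_eq_iff (by nlinarith [rt_lb])]; linear_combination (1/9780) * rt_sq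
lemma idd4lo : 1/(4 + p1) = d4lo := by
  unfold p1 d4lo; rw [div_eq_iff (by nlinarith [rt_lb])]; linear_combination (1/1660) * rt_sq
lemma idd4hi : 1/(4 + q2) = d4hi := by
  unfold q2 d4hi; rw [div_eq_iff (by nlinarith [rt_lb])]; linear_combination (1/16620) * rt_sq


-- words and Möbius data
/-- the Möbius step map -/
noncomputable def fm (a : ℕ) (t : ℝ) : ℝ := 1/((a:ℝ) + t)

noncomputable def E : List ℕ → ℝ → ℝ
  | [], z => z
  | a :: w, z => fm a (E w z)

def nxt (a : ℕ) : Bool := a == 1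

def ok (b : Bool) (a : ℕ) : Prop := 1 ≤ a ∧ a ≤ 4 ∧ (b = true → a ≤ 3)

def Adm : Bool → List ℕ → Prop
  | _, [] => True
  | b, a :: w => ok b a ∧ Adm (nxt a) w

def stA : Bool → List ℕ → Bool
  | b, [] => b
  | _, a :: w => stA (nxt a) w

lemma E_append (w : List ℕ) (a : ℕ) (z : ℝ) : E (w ++ [a]) z = E w (fm a z) := by
  induction w with
  | nil => rfl
  | cons x w ih => simp [E, ih]

lemma stA_append (b : Bool) (w : List ℕ) (a : ℕ) : stA b (w ++ [a]) = nxt a := by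
  induction w generalizing b with
  | nil => rfl
  | cons x w ih => simp [stA, ih]

lemma Adm_append {b : Bool} {w : List ℕ} {a : ℕ} (h : Adm b w) (h2 : ok (stA b w) a) :
    Adm b (w ++ [a]) := by
  induction w generalizing b with
  | nil => exact ⟨h2, trivial⟩
  | cons x w ih => exact ⟨h.1, ih h.2 h2⟩

lemma Adm_prefix {b : Bool} {w : List ℕ} {a : ℕ} (h : Adm b (w ++ [a])) : Adm b w := by
  induction w generalizing b with
  | nil => trivial
  | cons x w ih => exact ⟨h.1, ih h.2⟩

structure Mob where
  al : ℝ
  be : ℝ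
  ga : ℝ
  de : ℝ
  ep : ℝ

def MobOK (w : List ℕ) (m : Mob) : Prop :=
  (∀ z, 0 ≤ z → E w z = (m.al*z + m.be)/(m.ga*z + m.de)) ∧
  0 ≤ m.al ∧ 0 ≤ m.be ∧ 0 ≤ m.ga ∧ m.ga ≤ m.de ∧ 1 ≤ m.de ∧
  (m.ep = 1 ∨ m.ep = -1) ∧ m.al*m.de - m.be*m.ga = m.ep ∧
  (m.al ≤ m.be ∨ (m.al = 1 ∧ m.be = 0 ∧ m.ga = 0 ∧ m.de = 1))

lemma mob_exists : ∀ (w : List ℕ) (b : Bool), Adm b w → ∃ m : Mob, MobOK w m := by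
  intro w
  induction w with
  | nil =>
    intro b _
    refine ⟨⟨1, 0, 0, 1, 1⟩, fun z _ => by simp [E], ?_⟩
    norm_num
  | cons a w ih =>
    intro b hadm
    obtain ⟨m, hE, hal, hbe, hga, hgade, hde, hep, hdet, halbe⟩ := ih (nxt a) hadm.2
    have ha1 : 1 ≤ a := hadm.1.1
    have ha1R : (1:ℝ) ≤ (a:ℝ) := by exact_mod_cast ha1
    refine ⟨⟨m.ga, m.de, m.al + a*m.ga, m.be + a*m.de, -m.ep⟩, ?_, hga,
      le_trans (by norm_num) hde, ?_, ?_, ?_, ?_, ?_, ?_⟩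
    · intro z hz
      have hden : (0:ℝ) < m.ga*z + m.de := by nlinarith
      have hnum : (0:ℝ) ≤ m.al*z + m.be := by positivity
      have key : (a:ℝ) + (m.al*z+m.be)/(m.ga*z+m.de)
          = ((m.al + a*m.ga)*z + (m.be + a*m.de))/(m.ga*z+m.de) := by
        field_simp; ring
      show fm a (E w z) = _
      dsimp only
      rw [fm, hE z hz, key, one_div_div]
    · dsimp only; positivity
    · dsimp only
      rcases halbe with h | h
      · nlinarith
      · rw [h.1, h.2.1, h.2.2.1, h.2.2.2]; nlinarith
    · dsimp only; nlinarith
    · dsimp only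
      rcases hep with h | h <;> [right; left] <;> simp [h]
    · dsimp only; nlinarith [hdet]
    · dsimp only; exact Or.inl hgade



-- generic length lemmas
noncomputable def elen (g d z1 z2 : ℝ) : ℝ := (z2 - z1)/((g*z1+d)*(g*z2+d))

lemma den_pos {g d : ℝ} (hg : 0 ≤ g) (hd : 1 ≤ d) {z : ℝ} (hz : 0 ≤ z) : 0 < g*z+d := by
  nlinarith

lemma elen_nonneg {g d z1 z2 : ℝ} (hg : 0 ≤ g) (hd : 1 ≤ d) (h1 : 0 ≤ z1) (h12 : z1 ≤ z2) :
    0 ≤ elen g d z1 z2 := by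
  have d1 := den_pos hg hd h1
  have d2 := den_pos hg hd (le_trans h1 h12)
  unfold elen
  apply div_nonneg (by linarith) (by positivity)

lemma elen_pos {g d z1 z2 : ℝ} (hg : 0 ≤ g) (hd : 1 ≤ d) (h1 : 0 ≤ z1) (h12 : z1 < z2) :
    0 < elen g d z1 z2 := by
  have d1 := den_pos hg hd h1
  have d2 := den_pos hg hd (le_trans h1 h12.le)
  unfold elen
  apply div_pos (by linarith) (by positivity)

lemma lenA {g d : ℝ} (hg : 0 ≤ g) (hd : 1 ≤ d) {z1 z2 z3 z4 : ℝ} (h1 : 0 ≤ z1) (h12 : z1 ≤ z2)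
    (h34 : z3 ≤ z4) (h13 : z1 ≤ z3) (h24 : z2 ≤ z4) (hlen : z4 - z3 ≤ z2 - z1) :
    elen g d z3 z4 ≤ elen g d z1 z2 := by
  have h3 : 0 ≤ z3 := le_trans h1 h13
  have h4 : 0 ≤ z4 := le_trans h3 h34
  have d1 := den_pos hg hd h1
  have d2 := den_pos hg hd (le_trans h1 h12)
  have d3 := den_pos hg hd h3
  have d4 := den_pos hg hd h4
  unfold elen
  apply div_le_div₀ (by linarith) hlen (by positivity)
  nlinarith [mul_le_mul_of_nonneg_left h13 hg, mul_le_mul_of_nonneg_left h24 hg]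

lemma lenB {g d : ℝ} (hg : 0 ≤ g) (hd : 1 ≤ d) {w1 w2 w3 : ℝ} (h1 : 0 ≤ w1) (h12 : w1 ≤ w2)
    (h23 : w2 ≤ w3) (hBa : w2 - w1 ≤ w3 - w2) (hBb : (w2 - w1)*w3 ≤ (w3 - w2)*w1) :
    elen g d w1 w2 ≤ elen g d w2 w3 := by
  have h2 : 0 ≤ w2 := le_trans h1 h12
  have h3 : 0 ≤ w3 := le_trans h2 h23
  have d1 := den_pos hg hd h1
  have d2 := den_pos hg hd h2
  have d3 := den_pos hg hd h3
  unfold elen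
  rw [div_le_div_iff₀ (by positivity) (by positivity)]
  have key : (w2 - w1)*(g*w3+d) ≤ (w3 - w2)*(g*w1+d) := by
    nlinarith [mul_le_mul_of_nonneg_left hBb hg,
      mul_le_mul_of_nonneg_left hBa (le_trans zero_le_one hd)]
  nlinarith [mul_le_mul_of_nonneg_right key d2.le]

lemma lenC {g d : ℝ} (hg : 0 ≤ g) (hgd : g ≤ d) (hd : 1 ≤ d) {c1 c2 z3 z4 : ℝ}
    (hc1 : 0 ≤ c1) (hc12 : c1 ≤ c2) (h34 : z3 ≤ z4) (h13 : c1 ≤ z3) (h24 : c2 ≤ z4)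
    (hsc : (c2 - c1)*((z3+1)*(z4+1)) ≤ (z4 - z3)*((c1+1)*(c2+1))) :
    elen g d c1 c2 ≤ elen g d z3 z4 := by
  have hc2 : 0 ≤ c2 := le_trans hc1 hc12
  have h3 : 0 ≤ z3 := le_trans hc1 h13
  have h4 : 0 ≤ z4 := le_trans h3 h34
  have d1 := den_pos hg hd hc1
  have d2 := den_pos hg hd hc2
  have d3 := den_pos hg hd h3
  have d4 := den_pos hg hd h4
  unfold elen
  rw [div_le_div_iff₀ (by positivity) (by positivity)]
  have e1 : (g*z3+d)*(c1+1) ≤ (z3+1)*(g*c1+d) := by nlinarith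
  have e2 : (g*z4+d)*(c2+1) ≤ (z4+1)*(g*c2+d) := by nlinarith
  have e3 : ((g*z3+d)*(c1+1))*((g*z4+d)*(c2+1)) ≤ ((z3+1)*(g*c1+d))*((z4+1)*(g*c2+d)) := by
    apply mul_le_mul e1 e2 (by positivity) (by positivity)
  have e4 : (c2 - c1)*(((g*z3+d)*(c1+1))*((g*z4+d)*(c2+1)))
      ≤ (c2 - c1)*(((z3+1)*(g*c1+d))*((z4+1)*(g*c2+d))) := by
    apply mul_le_mul_of_nonneg_left e3 (by linarith)
  have e5 : ((c2 - c1)*((z3+1)*(z4+1)))*((g*c1+d)*(g*c2+d))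
      ≤ ((z4 - z3)*((c1+1)*(c2+1)))*((g*c1+d)*(g*c2+d)) := by
    apply mul_le_mul_of_nonneg_right hsc (by positivity)
  have e6 : ((c2 - c1)*((g*z3+d)*(g*z4+d)))*((c1+1)*(c2+1))
      ≤ ((z4 - z3)*((g*c1+d)*(g*c2+d)))*((c1+1)*(c2+1)) := by nlinarith
  have hpos : (0:ℝ) < (c1+1)*(c2+1) := by positivity
  have := (mul_le_mul_iff_of_pos_right hpos).mp e6
  linarith


lemma lenH {g d : ℝ} (hg : 0 ≤ g) (hgd : g ≤ d) (hd : 1 ≤ d) {z1 c1 c2 z2 : ℝ}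
    (h1 : 0 ≤ z1) (h1c : z1 ≤ c1) (hc12 : c1 ≤ c2) (hc2z : c2 ≤ z2)
    (hsc : 2*(c2 - c1)*(z2+1) ≤ (z2 - z1)*(c2+1)) :
    elen g d c1 c2 ≤ (1/2) * elen g d z1 z2 := by
  have hc1 : 0 ≤ c1 := le_trans h1 h1c
  have hc2 : 0 ≤ c2 := le_trans hc1 hc12
  have h2 : 0 ≤ z2 := le_trans hc2 hc2z
  have d1 := den_pos hg hd h1
  have d2 := den_pos hg hd h2
  have dc1 := den_pos hg hd hc1
  have dc2 := den_pos hg hd hc2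
  unfold elen
  rw [div_mul_div_comm, div_le_div_iff₀ (by positivity) (by positivity)]
  have e1 : g*z1+d ≤ g*c1+d := by nlinarith
  have e2 : (g*z2+d)*(c2+1) ≤ (z2+1)*(g*c2+d) := by nlinarith
  have e3 : (2*(c2-c1)*(z2+1))*(g*c2+d) ≤ ((z2-z1)*(c2+1))*(g*c2+d) := by
    apply mul_le_mul_of_nonneg_right hsc dc2.le
  nlinarith [mul_le_mul_of_nonneg_left e2 (by linarith : (0:ℝ) ≤ c2 - c1),
    mul_le_mul_of_nonneg_left e1 (mul_nonneg (by linarith : (0:ℝ) ≤ z2 - z1) dc2.le)]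

lemma elen_add {g d : ℝ} (hg : 0 ≤ g) (hd : 1 ≤ d) {z1 z2 z3 : ℝ}
    (h1 : 0 ≤ z1) (h2 : 0 ≤ z2) (h3 : 0 ≤ z3) :
    elen g d z1 z2 + elen g d z2 z3 = elen g d z1 z3 := by
  have d1 := den_pos hg hd h1
  have d2 := den_pos hg hd h2
  have d3 := den_pos hg hd h3
  unfold elen
  field_simp
  ring

lemma lenMono {g d : ℝ} (hg : 0 ≤ g) (hd : 1 ≤ d) {z1 c1 c2 z2 : ℝ}
    (h0 : 0 ≤ z1) (ha : z1 ≤ c1) (hb : c1 ≤ c2) (hc : c2 ≤ z2) :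
    elen g d c1 c2 ≤ elen g d z1 z2 := by
  have hc1 : 0 ≤ c1 := le_trans h0 ha
  have hc2 : 0 ≤ c2 := le_trans hc1 hb
  have hz2 : 0 ≤ z2 := le_trans hc2 hc
  have e1 := elen_nonneg hg hd h0 ha
  have e2 := elen_nonneg hg hd hc2 hc
  have a1 := elen_add hg hd h0 hc1 hc2
  have a2 := elen_add hg hd h0 hc2 hz2
  linarith

lemma E_diff {w : List ℕ} {m : Mob} (hm : MobOK w m) {z1 z2 : ℝ} (h1 : 0 ≤ z1) (h2 : 0 ≤ z2) :
    E w z2 - E w z1 = m.ep * elen m.ga m.de z1 z2 := by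
  obtain ⟨hE, hal, hbe, hga, hgade, hde, hep, hdet, _⟩ := hm
  have d1 := den_pos hga hde h1
  have d2 := den_pos hga hde h2
  rw [hE z1 h1, hE z2 h2, div_sub_div _ _ d2.ne' d1.ne']
  unfold elen
  rw [mul_div_assoc']
  rw [div_eq_div_iff (by positivity) (by positivity)]
  linear_combination ((z2 - z1) * ((m.ga*z1+m.de)*(m.ga*z2+m.de))) * hdet

lemma E_abs {w : List ℕ} {m : Mob} (hm : MobOK w m) {z1 z2 : ℝ} (h1 : 0 ≤ z1) (h12 : z1 ≤ z2) :
    |E w z2 - E w z1| = elen m.ga m.de z1 z2 := by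
  have h2 : 0 ≤ z2 := le_trans h1 h12
  have hnn : 0 ≤ elen m.ga m.de z1 z2 :=
    elen_nonneg hm.2.2.2.1 hm.2.2.2.2.2.1 h1 h12
  rw [E_diff hm h1 h2]
  rcases hm.2.2.2.2.2.2.1 with h | h <;> rw [h] <;> simp [abs_of_nonneg, hnn]


noncomputable def Lb (b : Bool) : ℝ := if b then a1 else a0

lemma Lb_pos (b : Bool) : 0 < Lb b := by
  cases b <;> simp [Lb] <;> [exact h_a0; linarith [h_a0, h_a0q4, h_q4a1]]

lemma a0_le_Lb (b : Bool) : a0 ≤ Lb b := by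
  cases b <;> simp [Lb] <;> linarith [h_a0q4, h_q4a1]

lemma Lb_le_b0 (b : Bool) : Lb b ≤ b0 := by
  cases b <;> simp [Lb] <;>
    linarith [h_a0q4, h_q4a1, h_a1q3, h_q3p2, h_p2q2, h_q2p1, h_p1b0]

lemma fm_le_fm {a : ℕ} (ha : 1 ≤ a) {z z' : ℝ} (hz : 0 ≤ z) (hzz : z ≤ z') :
    fm a z' ≤ fm a z := by
  have ha' : (1:ℝ) ≤ (a:ℝ) := by exact_mod_cast ha
  unfold fm
  apply one_div_le_one_div_of_le <;> linarith

lemma fm_mem {b : Bool} {a : ℕ} (hok : ok b a) {z : ℝ}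
    (hz1 : Lb (nxt a) ≤ z) (hz2 : z ≤ b0) : Lb b ≤ fm a z ∧ fm a z ≤ b0 := by
  obtain ⟨ha1, ha4, ha3⟩ := hok
  have hz0 : 0 < z := lt_of_lt_of_le (Lb_pos _) hz1
  have hb1 : b0 < 1 := h_b01
  have ha1' : (1:ℝ) ≤ (a:ℝ) := by exact_mod_cast ha1
  have ha4' : (a:ℝ) ≤ 4 := by exact_mod_cast ha4
  have hden : 0 < (a:ℝ) + z := by linarith
  constructor
  · -- lower bound
    have hub : fm a z ≥ 1/((a:ℝ) + b0) := by
      unfold fm; apply one_div_le_one_div_of_le <;> linarith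
    rcases b with _ | _
    · -- b = false : need a0 ≤ fm a z ; 1/(a+b0) ≥ 1/(4+b0) = a0
      have : 1/(4 + b0) ≤ 1/((a:ℝ) + b0) := by
        apply one_div_le_one_div_of_le <;> linarith
      calc Lb false = a0 := by simp [Lb]
        _ = 1/(4 + b0) := id48.symm
        _ ≤ 1/((a:ℝ) + b0) := this
        _ ≤ fm a z := hub
    · -- b = true : a ≤ 3, 1/(a+b0) ≥ 1/(3+b0) = a1
      have ha3' : (a:ℝ) ≤ 3 := by exact_mod_cast (ha3 rfl)
      have : 1/(3 + b0) ≤ 1/((a:ℝ) + b0) := by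
        apply one_div_le_one_div_of_le <;> linarith
      calc Lb true = a1 := by simp [Lb]
        _ = 1/(3 + b0) := id36.symm
        _ ≤ 1/((a:ℝ) + b0) := this
        _ ≤ fm a z := hub
  · -- upper bound
    rcases Nat.eq_or_lt_of_le ha1 with h1 | h2
    · -- a = 1 : z ≥ a1, fm 1 z ≤ 1/(1+a1) = b0
      have hnx : nxt a = true := by simp [nxt, ← h1]
      rw [hnx] at hz1
      simp only [Lb, if_true] at hz1
      have : fm a z ≤ 1/(1 + a1) := by
        unfold fm
        apply one_div_le_one_div_of_le
        · linarith [h_a0, h_a0q4, h_q4a1]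
        · rw [← h1]; push_cast; linarith
      rw [id11] at this; exact this
    · -- a ≥ 2
      have ha2' : (2:ℝ) ≤ (a:ℝ) := by exact_mod_cast h2
      have hz1' : a0 ≤ z := le_trans (a0_le_Lb _) hz1
      have : fm a z ≤ 1/(2 + a0) := by
        unfold fm
        apply one_div_le_one_div_of_le
        · linarith [h_a0]
        · linarith
      rw [id23] at this
      linarith [h_q2p1, h_p1b0]

lemma E_in_hull : ∀ (w : List ℕ) (b : Bool), Adm b w → ∀ z : ℝ,
    Lb (stA b w) ≤ z → z ≤ b0 → Lb b ≤ E w z ∧ E w z ≤ b0 := by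
  intro w
  induction w with
  | nil => intro b _ z h1 h2; exact ⟨h1, h2⟩
  | cons a w ih =>
    intro b hadm z h1 h2
    have hw := ih (nxt a) hadm.2 z h1 h2
    exact fm_mem hadm.1 hw.1 hw.2

lemma E_nonneg {w : List ℕ} {b : Bool} (hadm : Adm b w) {z : ℝ}
    (h1 : Lb (stA b w) ≤ z) (h2 : z ≤ b0) : 0 ≤ E w z :=
  le_trans (Lb_pos b).le (E_in_hull w b hadm z h1 h2).1

noncomputable def S : ℕ → Bool → Set ℝ
  | 0, b => Set.Icc (Lb b) b0
  | (n+1), b => ⋃ (a : ℕ) (_ : ok b a), fm a '' S n (nxt a)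

noncomputable def C (b : Bool) : Set ℝ := ⋂ n, S n b

lemma S_sub_hull : ∀ n b, S n b ⊆ Set.Icc (Lb b) b0 := by
  intro n
  induction n with
  | zero => intro b; exact subset_refl _
  | succ n ih =>
    intro b x hx
    simp only [S, Set.mem_iUnion] at hx
    obtain ⟨a, hok, y, hy, rfl⟩ := hx
    have := ih (nxt a) hy
    exact Set.mem_Icc.2 (fm_mem hok this.1 this.2)

lemma S_succ_sub : ∀ n b, S (n+1) b ⊆ S n b := by
  intro n
  induction n with
  | zero =>
    intro b x hx
    simp only [S, Set.mem_iUnion] at hx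
    obtain ⟨a, hok, y, hy, rfl⟩ := hx
    have := S_sub_hull 0 (nxt a) hy
    exact Set.mem_Icc.2 (fm_mem hok this.1 this.2)
  | succ n ih =>
    intro b x hx
    simp only [S, Set.mem_iUnion] at hx ⊢
    obtain ⟨a, hok, y, hy, rfl⟩ := hx
    exact ⟨a, hok, y, ih _ hy, rfl⟩

lemma S_mono {m n : ℕ} (h : m ≤ n) (b : Bool) : S n b ⊆ S m b := by
  induction n with
  | zero => simp_all
  | succ n ih =>
    rcases Nat.eq_or_lt_of_le h with h1 | h2
    · rw [h1]
    · exact le_trans (S_succ_sub n b) (ih (Nat.lt_succ_iff.1 h2))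

lemma C_sub_hull (b : Bool) : C b ⊆ Set.Icc (Lb b) b0 := by
  intro x hx
  exact S_sub_hull 0 b (Set.mem_iInter.1 hx 0)

lemma C_step {b : Bool} {t : ℝ} (h : t ∈ C b) :
    ∃ a, ok b a ∧ ∃ t', t' ∈ C (nxt a) ∧ t = fm a t' := by
  have key : ∃ a, ok b a ∧ ∀ n, t ∈ fm a '' S n (nxt a) := by
    by_contra hc
    push_neg at hc
    have hall : ∀ a, ∃ n, ok b a → t ∉ fm a '' S n (nxt a) := by
      intro a
      by_cases hok : ok b a
      · obtain ⟨n, hn⟩ := hc a hok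
        exact ⟨n, fun _ => hn⟩
      · exact ⟨0, fun h => absurd h hok⟩
    choose N hN using hall
    set M := (N 1) + (N 2) + (N 3) + (N 4) with hM
    have hSM : t ∈ S (M+1) b := Set.mem_iInter.1 h (M+1)
    simp only [S, Set.mem_iUnion] at hSM
    obtain ⟨a, hok, y, hy, hfy⟩ := hSM
    have ha4 := hok.2.1
    have ha1 := hok.1
    have hMa : N a ≤ M := by
      interval_cases a <;> omega
    exact hN a hok ⟨y, S_mono hMa (nxt a) hy, hfy⟩
  obtain ⟨a, hok, hP⟩ := key
  have ha1' : (1:ℝ) ≤ (a:ℝ) := by exact_mod_cast hok.1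
  refine ⟨a, hok, 1/t - a, ?_, ?_⟩
  · apply Set.mem_iInter.2
    intro n
    obtain ⟨y, hy, hfy⟩ := hP n
    have hyIcc := S_sub_hull n (nxt a) hy
    have hy0 : 0 < y := lt_of_lt_of_le (Lb_pos _) hyIcc.1
    have hden : 0 < (a:ℝ) + y := by linarith
    have : 1/t - a = y := by
      rw [← hfy]; unfold fm
      rw [one_div_one_div]; ring
    rw [this]; exact hy
  · obtain ⟨y, hy, hfy⟩ := hP 0
    have hyIcc := S_sub_hull 0 (nxt a) hy
    have hy0 : 0 < y := lt_of_lt_of_le (Lb_pos _) hyIcc.1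
    have hden : 0 < (a:ℝ) + y := by linarith
    have : 1/t - a = y := by
      rw [← hfy]; unfold fm
      rw [one_div_one_div]; ring
    rw [this, hfy]

lemma C_gap {b : Bool} {t : ℝ} (h : t ∈ C b) : t ≤ q2 ∨ p1 ≤ t := by
  obtain ⟨a, hok, t', ht', rfl⟩ := C_step h
  have hIcc := C_sub_hull _ ht'
  have h0 : 0 < t' := lt_of_lt_of_le (Lb_pos _) hIcc.1
  rcases Nat.eq_or_lt_of_le hok.1 with h1 | h2
  · right
    have : fm a t' ≥ 1/(1 + b0) := by
      unfold fm
      apply one_div_le_one_div_of_le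
      · linarith
      · rw [← h1]; push_cast; linarith [hIcc.2]
    rw [id12] at this; exact this
  · left
    have ha2' : (2:ℝ) ≤ (a:ℝ) := by exact_mod_cast h2
    have haz : a0 ≤ t' := le_trans (a0_le_Lb _) hIcc.1
    have : fm a t' ≤ 1/(2 + a0) := by
      unfold fm
      apply one_div_le_one_div_of_le
      · linarith [h_a0]
      · linarith
    rw [id23] at this; exact this


-- rounding helpers
lemma round_zero_of {x : ℝ} (h1 : -(1/2) < x) (h2 : x < 1/2) : round x = 0 := by
  rw [round_eq, Int.floor_eq_zero_iff]
  constructor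
  · simp; linarith
  · simp; linarith

lemma round_shift (k : ℤ) (x : ℝ) : round ((k:ℝ) + x) = k + round x := by
  rw [add_comm, round_add_intCast, add_comm]

/-- remainders reachable by the NICF algorithm from our Cantor sets -/
def Rem (r : ℝ) : Prop :=
  ∃ b, ∃ t ∈ C b,
    (r = t ∧ t < 1/2) ∨ (r = t - 1 ∧ 1/2 < t) ∨ (r = -t ∧ t < 1/2) ∨ (r = 1 - t ∧ 1/2 < t)

lemma q2_half : q2 < 1/2 := by unfold q2; linarith [rt_lb, rt_ub]
lemma p1_half : 1/2 < p1 := by unfold p1; linarith [rt_lb, rt_ub]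

lemma C_half {b : Bool} {t : ℝ} (h : t ∈ C b) : t < 1/2 ∨ 1/2 < t := by
  rcases C_gap h with h1 | h1
  · left; linarith [q2_half]
  · right; linarith [p1_half]

lemma C_pos {b : Bool} {t : ℝ} (h : t ∈ C b) : 0 < t :=
  lt_of_lt_of_le (Lb_pos b) (C_sub_hull b h).1

lemma C_lt_one {b : Bool} {t : ℝ} (h : t ∈ C b) : t < 1 :=
  lt_of_le_of_lt (C_sub_hull b h).2 h_b01

lemma fm_eq {a : ℕ} {t' : ℝ} (h0 : 0 < (a:ℝ) + t') : 1/(fm a t') = (a:ℝ) + t' := by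
  unfold fm; rw [one_div_one_div]

lemma digit_ge_two {a : ℕ} (hok1 : 1 ≤ a) {t' : ℝ} (h0 : 0 < t') (h1 : t' < 1)
    (hlt : fm a t' < 1/2) : 2 ≤ a := by
  by_contra hc
  push_neg at hc
  have ha : a = 1 := by omega
  subst ha
  unfold fm at hlt; push_cast at hlt
  rw [div_lt_iff₀ (by linarith)] at hlt
  linarith

lemma digit_eq_one {a : ℕ} (hok1 : 1 ≤ a) {t' : ℝ} (h0 : 0 < t')
    (hgt : 1/2 < fm a t') : a = 1 := by
  by_contra hc
  have ha2 : 2 ≤ a := by omega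
  have ha2R : (2:ℝ) ≤ (a:ℝ) := by exact_mod_cast ha2
  unfold fm at hgt
  rw [lt_div_iff₀ (by linarith)] at hgt
  linarith

lemma step_pack {r ρ : ℝ} {K : ℤ} (hinv : 1/r = (K:ℝ) + ρ) (h1 : -(1/2) < ρ)
    (h2 : ρ < 1/2) (hK : |K| ≤ 5) (hρ : Rem ρ) :
    |round (1/r)| ≤ 5 ∧ Rem (1/r - round (1/r)) := by
  have hrd : round (1/r) = K := by rw [hinv, round_shift, round_zero_of h1 h2, add_zero]
  rw [hrd]
  refine ⟨hK, ?_⟩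
  rw [hinv]
  simpa using hρ

/-- the main one-step lemma for the NICF on our set -/
lemma Rem_step {r : ℝ} (h : Rem r) :
    |round (1/r)| ≤ 5 ∧ Rem (1/r - round (1/r)) := by
  obtain ⟨b, t, ht, hcase⟩ := h
  obtain ⟨a, hok, t', ht', hfm⟩ := C_step ht
  have h0' : 0 < t' := C_pos ht'
  have h1' : t' < 1 := C_lt_one ht'
  have ha1R : (1:ℝ) ≤ (a:ℝ) := by exact_mod_cast hok.1
  have ha4R : (a:ℝ) ≤ 4 := by exact_mod_cast hok.2.1
  have hden : 0 < (a:ℝ) + t' := by linarith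
  rcases hcase with ⟨hr, hlt⟩ | ⟨hr, hgt⟩ | ⟨hr, hlt⟩ | ⟨hr, hgt⟩
  · -- r = t, t < 1/2
    have ha2 : 2 ≤ a := digit_ge_two hok.1 h0' h1' (hfm ▸ hlt)
    have ha2R : (2:ℝ) ≤ (a:ℝ) := by exact_mod_cast ha2
    rcases C_half ht' with h2 | h2
    · refine step_pack (K := (a:ℤ)) (ρ := t') ?_ (by linarith) h2 ?_ ⟨_, t', ht', Or.inl ⟨rfl, h2⟩⟩
      · rw [hr, hfm, fm_eq hden]; push_cast; ring
      · have hz1 : (1:ℤ) ≤ (a:ℤ) := by exact_mod_cast hok.1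
        have hz4 : (a:ℤ) ≤ 4 := by exact_mod_cast hok.2.1
        rw [abs_le]; omega
    · refine step_pack (K := (a:ℤ) + 1) (ρ := t' - 1) ?_ (by linarith) (by linarith) ?_
        ⟨_, t', ht', Or.inr (Or.inl ⟨rfl, h2⟩)⟩
      · rw [hr, hfm, fm_eq hden]; push_cast; ring
      · have hz1 : (1:ℤ) ≤ (a:ℤ) := by exact_mod_cast hok.1
        have hz4 : (a:ℤ) ≤ 4 := by exact_mod_cast hok.2.1
        rw [abs_le]; omega
  · -- r = t - 1, 1/2 < t
    have ha1 : a = 1 := digit_eq_one hok.1 h0' (hfm ▸ hgt)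
    subst ha1
    obtain ⟨a', hok', t'', ht'', hfm'⟩ := C_step ht'
    have h0'' : 0 < t'' := C_pos ht''
    have h1'' : t'' < 1 := C_lt_one ht''
    have ha'3 : a' ≤ 3 := hok'.2.2 (by simp [nxt])
    have ha'1R : (1:ℝ) ≤ (a':ℝ) := by exact_mod_cast hok'.1
    have ha'3R : (a':ℝ) ≤ 3 := by exact_mod_cast ha'3
    have hden' : 0 < (a':ℝ) + t'' := by linarith
    have ht'eq : t' = 1/((a':ℝ) + t'') := by rw [hfm']; rfl
    have hrval : r = -(t'/(1+t')) := by
      rw [hr, hfm]; unfold fm; push_cast; field_simp; ring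
    have hrne : r ≠ 0 := by
      rw [hrval]
      have : 0 < t'/(1+t') := by positivity
      linarith
    rcases C_half ht'' with h2 | h2
    · refine step_pack (K := -1 - (a':ℤ)) (ρ := -t'') ?_ (by linarith) (by linarith) ?_
        ⟨_, t'', ht'', Or.inr (Or.inr (Or.inl ⟨rfl, h2⟩))⟩
      · rw [div_eq_iff hrne, hrval, ht'eq]
        push_cast
        field_simp
        ring
      · have hz1 : (1:ℤ) ≤ (a':ℤ) := by exact_mod_cast hok'.1
        have hz3 : (a':ℤ) ≤ 3 := by exact_mod_cast ha'3
        rw [abs_le]; omega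
    · refine step_pack (K := -2 - (a':ℤ)) (ρ := 1 - t'') ?_ (by linarith) (by linarith) ?_
        ⟨_, t'', ht'', Or.inr (Or.inr (Or.inr ⟨rfl, h2⟩))⟩
      · rw [div_eq_iff hrne, hrval, ht'eq]
        push_cast
        field_simp
        ring
      · have hz1 : (1:ℤ) ≤ (a':ℤ) := by exact_mod_cast hok'.1
        have hz3 : (a':ℤ) ≤ 3 := by exact_mod_cast ha'3
        rw [abs_le]; omega
  · -- r = -t, t < 1/2
    have ha2 : 2 ≤ a := digit_ge_two hok.1 h0' h1' (hfm ▸ hlt)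
    have ha2R : (2:ℝ) ≤ (a:ℝ) := by exact_mod_cast ha2
    have hrne : r ≠ 0 := by
      rw [hr]
      have := C_pos ht
      linarith
    rcases C_half ht' with h2 | h2
    · refine step_pack (K := -(a:ℤ)) (ρ := -t') ?_ (by linarith) (by linarith) ?_
        ⟨_, t', ht', Or.inr (Or.inr (Or.inl ⟨rfl, h2⟩))⟩
      · rw [div_eq_iff hrne, hr, hfm]; unfold fm; push_cast; field_simp; ring
      · have hz1 : (1:ℤ) ≤ (a:ℤ) := by exact_mod_cast hok.1
        have hz4 : (a:ℤ) ≤ 4 := by exact_mod_cast hok.2.1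
        rw [abs_le]; omega
    · refine step_pack (K := -(a:ℤ) - 1) (ρ := 1 - t') ?_ (by linarith) (by linarith) ?_
        ⟨_, t', ht', Or.inr (Or.inr (Or.inr ⟨rfl, h2⟩))⟩
      · rw [div_eq_iff hrne, hr, hfm]; unfold fm; push_cast; field_simp; ring
      · have hz1 : (1:ℤ) ≤ (a:ℤ) := by exact_mod_cast hok.1
        have hz4 : (a:ℤ) ≤ 4 := by exact_mod_cast hok.2.1
        rw [abs_le]; omega
  · -- r = 1 - t, 1/2 < t
    have ha1 : a = 1 := digit_eq_one hok.1 h0' (hfm ▸ hgt)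
    subst ha1
    obtain ⟨a', hok', t'', ht'', hfm'⟩ := C_step ht'
    have h0'' : 0 < t'' := C_pos ht''
    have h1'' : t'' < 1 := C_lt_one ht''
    have ha'3 : a' ≤ 3 := hok'.2.2 (by simp [nxt])
    have ha'1R : (1:ℝ) ≤ (a':ℝ) := by exact_mod_cast hok'.1
    have ha'3R : (a':ℝ) ≤ 3 := by exact_mod_cast ha'3
    have hden' : 0 < (a':ℝ) + t'' := by linarith
    have ht'eq : t' = 1/((a':ℝ) + t'') := by rw [hfm']; rfl
    have hrval : r = t'/(1+t') := by
      rw [hr, hfm]; unfold fm; push_cast; field_simp; ring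
    have hrne : r ≠ 0 := by
      rw [hrval]
      have : 0 < t'/(1+t') := by positivity
      linarith
    rcases C_half ht'' with h2 | h2
    · refine step_pack (K := 1 + (a':ℤ)) (ρ := t'') ?_ (by linarith) h2 ?_
        ⟨_, t'', ht'', Or.inl ⟨rfl, h2⟩⟩
      · rw [div_eq_iff hrne, hrval, ht'eq]
        push_cast
        field_simp
        ring
      · have hz1 : (1:ℤ) ≤ (a':ℤ) := by exact_mod_cast hok'.1
        have hz3 : (a':ℤ) ≤ 3 := by exact_mod_cast ha'3
        rw [abs_le]; omega
    · refine step_pack (K := 2 + (a':ℤ)) (ρ := t'' - 1) ?_ (by linarith) (by linarith) ?_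
        ⟨_, t'', ht'', Or.inr (Or.inl ⟨rfl, h2⟩)⟩
      · rw [div_eq_iff hrne, hrval, ht'eq]
        push_cast
        field_simp
        ring
      · have hz1 : (1:ℤ) ≤ (a':ℤ) := by exact_mod_cast hok'.1
        have hz3 : (a':ℤ) ≤ 3 := by exact_mod_cast ha'3
        rw [abs_le]; omega


/-- main membership lemma: an integer plus a point of `C b` lies in `NICFset 5`. -/
lemma mem_NICFset (k : ℤ) {b : Bool} {t : ℝ} (ht : t ∈ C b) :
    ((k : ℝ) + t) ∈ NICFset 5 := by
  set x : ℝ := (k : ℝ) + t with hx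
  have base : Rem (nicfX x 0 - round (nicfX x 0)) := by
    have hx0 : nicfX x 0 = x := rfl
    rcases C_half ht with h1 | h1
    · have hrd : round x = k := by
        rw [hx, round_shift, round_zero_of (by linarith [C_pos ht]) h1, add_zero]
      rw [hx0, hrd, hx]
      exact ⟨b, t, ht, Or.inl ⟨by ring, h1⟩⟩
    · have hrd : round x = k + 1 := by
        rw [hx, round_shift]
        congr 1
        rw [round_eq, Int.floor_eq_iff]
        push_cast
        constructor <;> linarith [C_lt_one ht]
      rw [hx0, hrd, hx]
      push_cast
      exact ⟨b, t, ht, Or.inr (Or.inl ⟨by ring, h1⟩)⟩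
  have main : ∀ j, Rem (nicfX x j - round (nicfX x j)) := by
    intro j
    induction j with
    | zero => exact base
    | succ j ih =>
      have hstep := Rem_step ih
      have hX : nicfX x (j+1) = 1/(nicfX x j - round (nicfX x j)) := rfl
      rw [hX]
      exact hstep.2
  intro i hi _
  obtain ⟨j, rfl⟩ : ∃ j, i = j + 1 := ⟨i - 1, by omega⟩
  have hstep := Rem_step (main j)
  have hX : nicfX x (j+1) = 1/(nicfX x j - round (nicfX x j)) := rfl
  show |round (nicfX x (j+1))| ≤ 5
  rw [hX]
  exact hstep.1

/-! ### The bridge/piece structure for the descent -/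

inductive Node | n00 | n01 | n02 | n10 | n11
  deriving DecidableEq

open Node

def stOf : Node → Bool
  | n00 => false | n01 => false | n02 => false | n10 => true | n11 => true

noncomputable def bL : Node → ℝ
  | n00 => a0 | n01 => a0 | n02 => a0 | n10 => a1 | n11 => a1
noncomputable def bH : Node → ℝ
  | n00 => b0 | n01 => q2 | n02 => q3 | n10 => b0 | n11 => q2
noncomputable def gL : Node → ℝ
  | n00 => q2 | n01 => q3 | n02 => q4 | n10 => q2 | n11 => q3
noncomputable def gH : Node → ℝ
  | n00 => p1 | n01 => p2 | n02 => a1 | n10 => p1 | n11 => p2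

def chL : Node → Node ⊕ ℕ
  | n00 => .inl n01 | n01 => .inl n02 | n02 => .inr 4 | n10 => .inl n11 | n11 => .inr 3
def chR : Node → Node ⊕ ℕ
  | n00 => .inr 1 | n01 => .inr 2 | n02 => .inr 3 | n10 => .inr 1 | n11 => .inr 2

def ndDepth : Node → ℕ
  | n00 => 0 | n01 => 1 | n02 => 2 | n10 => 0 | n11 => 1

def rootOf (b : Bool) : Node := if b then n10 else n00

lemma stOf_rootOf (b : Bool) : stOf (rootOf b) = b := by cases b <;> rfl

-- fm at the basic constants
lemma fm1a1 : fm 1 a1 = b0 := by unfold fm; push_cast; exact id11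
lemma fm1b0 : fm 1 b0 = p1 := by unfold fm; push_cast; exact id12
lemma fm2a0 : fm 2 a0 = q2 := by unfold fm; push_cast; exact id23
lemma fm2b0 : fm 2 b0 = p2 := by unfold fm; push_cast; exact id24
lemma fm3a0 : fm 3 a0 = q3 := by unfold fm; push_cast; exact id35
lemma fm3b0 : fm 3 b0 = a1 := by unfold fm; push_cast; exact id36
lemma fm4a0 : fm 4 a0 = q4 := by unfold fm; push_cast; exact id47
lemma fm4b0 : fm 4 b0 = a0 := by unfold fm; push_cast; exact id48
lemma fm1p1 : fm 1 p1 = d1lo := by unfold fm; push_cast; exact idd1lo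
lemma fm1q2 : fm 1 q2 = d1hi := by unfold fm; push_cast; exact idd1hi
lemma fm2p1 : fm 2 p1 = d2lo := by unfold fm; push_cast; exact idd2lo
lemma fm2q2 : fm 2 q2 = d2hi := by unfold fm; push_cast; exact idd2hi
lemma fm3p1 : fm 3 p1 = d3lo := by unfold fm; push_cast; exact idd3lo
lemma fm3q2 : fm 3 q2 = d3hi := by unfold fm; push_cast; exact idd3hi
lemma fm4p1 : fm 4 p1 = d4lo := by unfold fm; push_cast; exact idd4lo
lemma fm4q2 : fm 4 q2 = d4hi := by unfold fm; push_cast; exact idd4hi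

/-- a side of the descent: a word together with a piece of the bridge tree -/
structure Side where
  w : List ℕ
  nd : Node
  hadm : Adm false w
  hst : stA false w = stOf nd

noncomputable def lo (X : Side) : ℝ := min (E X.w (bL X.nd)) (E X.w (bH X.nd))
noncomputable def hi (X : Side) : ℝ := max (E X.w (bL X.nd)) (E X.w (bH X.nd))
noncomputable def glo (X : Side) : ℝ := min (E X.w (gL X.nd)) (E X.w (gH X.nd))
noncomputable def ghi (X : Side) : ℝ := max (E X.w (gL X.nd)) (E X.w (gH X.nd))
noncomputable def pLen (X : Side) : ℝ := hi X - lo X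
noncomputable def gapLen (X : Side) : ℝ := ghi X - glo X
def rank (X : Side) : ℕ := 3 * X.w.length + ndDepth X.nd

noncomputable def cLo : Node ⊕ ℕ → ℝ
  | .inl nd => bL nd
  | .inr a => fm a b0
noncomputable def cHi : Node ⊕ ℕ → ℝ
  | .inl nd => bH nd
  | .inr a => fm a (Lb (nxt a))
noncomputable def cGlo : Node ⊕ ℕ → ℝ
  | .inl nd => gL nd
  | .inr a => fm a p1
noncomputable def cGhi : Node ⊕ ℕ → ℝ
  | .inl nd => gH nd
  | .inr a => fm a q2

def okCh (b : Bool) : Node ⊕ ℕ → Prop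
  | .inl nd => stOf nd = b
  | .inr a => ok b a

lemma okChL (nd : Node) : okCh (stOf nd) (chL nd) := by
  cases nd <;> simp [okCh, chL, stOf, ok, nxt]
lemma okChR (nd : Node) : okCh (stOf nd) (chR nd) := by
  cases nd <;> simp [okCh, chR, stOf, ok, nxt]

noncomputable def mkChild (X : Side) : (c : Node ⊕ ℕ) → okCh (stOf X.nd) c → Side
  | .inl nd', h => ⟨X.w, nd', X.hadm, X.hst.trans h.symm⟩
  | .inr a, h => ⟨X.w ++ [a], rootOf (nxt a),
      Adm_append X.hadm (by rw [X.hst]; exact h),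
      by rw [stA_append, stOf_rootOf]⟩

lemma bL_rootOf (b : Bool) : bL (rootOf b) = Lb b := by cases b <;> rfl
lemma bH_rootOf (b : Bool) : bH (rootOf b) = b0 := by cases b <;> rfl
lemma gL_rootOf (b : Bool) : gL (rootOf b) = q2 := by cases b <;> rfl
lemma gH_rootOf (b : Bool) : gH (rootOf b) = p1 := by cases b <;> rfl

lemma mk_lo (X : Side) (c : Node ⊕ ℕ) (h : okCh (stOf X.nd) c) :
    lo (mkChild X c h) = min (E X.w (cLo c)) (E X.w (cHi c)) := by
  cases c with
  | inl nd' => rfl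
  | inr a =>
    show min (E (X.w ++ [a]) (bL (rootOf (nxt a)))) (E (X.w ++ [a]) (bH (rootOf (nxt a)))) = _
    rw [E_append, E_append, bL_rootOf, bH_rootOf, min_comm]
    rfl

lemma mk_hi (X : Side) (c : Node ⊕ ℕ) (h : okCh (stOf X.nd) c) :
    hi (mkChild X c h) = max (E X.w (cLo c)) (E X.w (cHi c)) := by
  cases c with
  | inl nd' => rfl
  | inr a =>
    show max (E (X.w ++ [a]) (bL (rootOf (nxt a)))) (E (X.w ++ [a]) (bH (rootOf (nxt a)))) = _
    rw [E_append, E_append, bL_rootOf, bH_rootOf, max_comm]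
    rfl

lemma mk_glo (X : Side) (c : Node ⊕ ℕ) (h : okCh (stOf X.nd) c) :
    glo (mkChild X c h) = min (E X.w (cGlo c)) (E X.w (cGhi c)) := by
  cases c with
  | inl nd' => rfl
  | inr a =>
    show min (E (X.w ++ [a]) (gL (rootOf (nxt a)))) (E (X.w ++ [a]) (gH (rootOf (nxt a)))) = _
    rw [E_append, E_append, gL_rootOf, gH_rootOf, min_comm]
    rfl

lemma mk_ghi (X : Side) (c : Node ⊕ ℕ) (h : okCh (stOf X.nd) c) :
    ghi (mkChild X c h) = max (E X.w (cGlo c)) (E X.w (cGhi c)) := by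
  cases c with
  | inl nd' => rfl
  | inr a =>
    show max (E (X.w ++ [a]) (gL (rootOf (nxt a)))) (E (X.w ++ [a]) (gH (rootOf (nxt a)))) = _
    rw [E_append, E_append, gL_rootOf, gH_rootOf, max_comm]
    rfl

lemma mk_rankL (X : Side) (h : okCh (stOf X.nd) (chL X.nd)) :
    rank X < rank (mkChild X (chL X.nd) h) := by
  obtain ⟨w, nd, hadm, hst⟩ := X
  cases nd <;>
    simp [rank, mkChild, chL, ndDepth, List.length_append] <;> omega

lemma mk_rankR (X : Side) (h : okCh (stOf X.nd) (chR X.nd)) :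
    rank X < rank (mkChild X (chR X.nd) h) := by
  obtain ⟨w, nd, hadm, hst⟩ := X
  cases nd <;>
    simp [rank, mkChild, chR, ndDepth, List.length_append] <;> omega

lemma nd_ord (nd : Node) : 0 < bL nd ∧ bL nd < gL nd ∧ gL nd < gH nd ∧ gH nd < bH nd := by
  have c0 := h_a0; have c1 := h_a0q4; have c2 := h_q4a1; have c3 := h_a1q3
  have c4 := h_q3p2; have c5 := h_p2q2; have c6 := h_q2p1; have c7 := h_p1b0
  cases nd <;> exact ⟨by simp [bL]; linarith, by simp [bL, gL]; linarith,
    by simp [gL, gH]; linarith, by simp [gH, bH]; linarith⟩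

lemma chL_ends (nd : Node) : cLo (chL nd) = bL nd ∧ cHi (chL nd) = gL nd := by
  cases nd <;>
    simp [chL, cLo, cHi, bL, bH, gL, nxt, Lb, fm4b0, fm4a0, fm3b0, fm3a0]

lemma chR_ends (nd : Node) : cLo (chR nd) = gH nd ∧ cHi (chR nd) = bH nd := by
  cases nd <;>
    simp [chR, cLo, cHi, gH, bH, nxt, Lb, fm1b0, fm1a1, fm2b0, fm2a0, fm3b0, fm3a0]

lemma h_d4lo_pos : 0 < d4lo := by unfold d4lo; linarith [rt_lb, rt_ub]
lemma h_d3lo_pos : 0 < d3lo := by unfold d3lo; linarith [rt_lb, rt_ub]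

lemma tau_chain (nd : Node) {g d : ℝ} (hg : 0 ≤ g) (hgd : g ≤ d) (hd : 1 ≤ d) :
    elen g d (gL nd) (gH nd) ≤ elen g d (bL nd) (gL nd) ∧
    elen g d (gL nd) (gH nd) ≤ elen g d (gH nd) (bH nd) ∧
    elen g d (cGlo (chL nd)) (cGhi (chL nd)) ≤ elen g d (gL nd) (gH nd) ∧
    elen g d (cGlo (chR nd)) (cGhi (chR nd)) ≤ elen g d (gL nd) (gH nd) := by
  have c0 := h_a0; have c1 := h_a0q4; have c2 := h_q4a1; have c3 := h_a1q3
  have c4 := h_q3p2; have c5 := h_p2q2; have c6 := h_q2p1; have c7 := h_p1b0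
  have e1a := dD1a; have e1b := dD1b; have e2a := dD2a; have e2b := dD2b
  have e3a := dD3a; have e3b := dD3b
  have f4 := h_d4lo_pos; have f3 := h_d3lo_pos
  have g1 := h_d1; have g2 := h_d2; have g3 := h_d3; have g4 := h_d4
  have k3a := cC3a; have k3b := cC3b; have k4a := cC4a; have k4b := cC4b
  cases nd with
  | n00 =>
    refine ⟨?_, ?_, ?_, ?_⟩
    · simpa [bL, gL, gH] using
        lenA hg hd (by linarith) (by linarith) (by linarith) (by linarith) (by linarith) tL1
    · simpa [bH, gL, gH] using
        lenB hg hd (by linarith) (by linarith) (by linarith) tR1a tR1b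
    · simp only [chL, cGlo, cGhi, gL, gH]
      exact lenC hg hgd hd (by linarith) (by linarith) (by linarith) (by linarith)
        (by linarith) cC1
    · simp only [chR, cGlo, cGhi, gL, gH, fm1p1, fm1q2]
      exact lenA hg hd (by linarith) (by linarith) (by linarith) (by linarith) (by linarith) dD1c
  | n01 =>
    refine ⟨?_, ?_, ?_, ?_⟩
    · simpa [bL, gL, gH] using
        lenA hg hd (by linarith) (by linarith) (by linarith) (by linarith) (by linarith) tL2
    · simpa [bH, gL, gH] using
        lenB hg hd (by linarith) (by linarith) (by linarith) tR2a tR2b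
    · simp only [chL, cGlo, cGhi, gL, gH]
      exact lenC hg hgd hd (by linarith) (by linarith) (by linarith) (by linarith)
        (by linarith) cC2
    · simp only [chR, cGlo, cGhi, gL, gH, fm2p1, fm2q2]
      exact lenA hg hd (by linarith) (by linarith) (by linarith) (by linarith) (by linarith) dD2c
  | n02 =>
    refine ⟨?_, ?_, ?_, ?_⟩
    · simpa [bL, gL, gH] using
        lenA hg hd (by linarith) (by linarith) (by linarith) (by linarith) (by linarith) tL3
    · simpa [bH, gL, gH] using
        lenB hg hd (by linarith) (by linarith) (by linarith) tR3a tR3b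
    · simp only [chL, cGlo, cGhi, gL, gH, fm4p1, fm4q2]
      exact lenC hg hgd hd (by linarith) (by linarith) (by linarith) (by linarith)
        (by linarith) cC3
    · simp only [chR, cGlo, cGhi, gL, gH, fm3p1, fm3q2]
      exact lenA hg hd (by linarith) (by linarith) (by linarith) (by linarith) (by linarith) dD3c
  | n10 =>
    refine ⟨?_, ?_, ?_, ?_⟩
    · simpa [bL, gL, gH] using
        lenA hg hd (by linarith) (by linarith) (by linarith) (by linarith) (by linarith) tL4
    · simpa [bH, gL, gH] using
        lenB hg hd (by linarith) (by linarith) (by linarith) tR1a tR1b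
    · simp only [chL, cGlo, cGhi, gL, gH]
      exact lenC hg hgd hd (by linarith) (by linarith) (by linarith) (by linarith)
        (by linarith) cC1
    · simp only [chR, cGlo, cGhi, gL, gH, fm1p1, fm1q2]
      exact lenA hg hd (by linarith) (by linarith) (by linarith) (by linarith) (by linarith) dD1c
  | n11 =>
    refine ⟨?_, ?_, ?_, ?_⟩
    · simpa [bL, gL, gH] using
        lenA hg hd (by linarith) (by linarith) (by linarith) (by linarith) (by linarith) tL5
    · simpa [bH, gL, gH] using
        lenB hg hd (by linarith) (by linarith) (by linarith) tR2a tR2b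
    · simp only [chL, cGlo, cGhi, gL, gH, fm3p1, fm3q2]
      exact lenC hg hgd hd (by linarith) (by linarith) (by linarith) (by linarith)
        (by linarith) cC4
    · simp only [chR, cGlo, cGhi, gL, gH, fm2p1, fm2q2]
      exact lenA hg hd (by linarith) (by linarith) (by linarith) (by linarith) (by linarith) dD2c


lemma ch_gap_ordL (nd : Node) : 0 < cGlo (chL nd) ∧ cGlo (chL nd) < cGhi (chL nd) := by
  have c0 := h_a0; have c1 := h_a0q4; have c2 := h_q4a1; have c3 := h_a1q3
  have c4 := h_q3p2; have c5 := h_p2q2; have c6 := h_q2p1; have c7 := h_p1b0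
  cases nd with
  | n00 => exact ⟨by simp only [chL, cGlo, gL]; linarith,
      by simp only [chL, cGlo, cGhi, gL, gH]; linarith⟩
  | n01 => exact ⟨by simp only [chL, cGlo, gL]; linarith,
      by simp only [chL, cGlo, cGhi, gL, gH]; linarith⟩
  | n02 => exact ⟨by simp only [chL, cGlo, fm4p1]; exact h_d4lo_pos,
      by simp only [chL, cGlo, cGhi, fm4p1, fm4q2]; exact h_d4⟩
  | n10 => exact ⟨by simp only [chL, cGlo, gL]; linarith,
      by simp only [chL, cGlo, cGhi, gL, gH]; linarith⟩
  | n11 => exact ⟨by simp only [chL, cGlo, fm3p1]; exact h_d3lo_pos,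
      by simp only [chL, cGlo, cGhi, fm3p1, fm3q2]; exact h_d3⟩

lemma ch_gap_ordR (nd : Node) : 0 < cGlo (chR nd) ∧ cGlo (chR nd) < cGhi (chR nd) := by
  have c0 := h_a0; have c1 := h_a0q4; have c2 := h_q4a1; have c3 := h_a1q3
  have c4 := h_q3p2; have c5 := h_p2q2; have c6 := h_q2p1; have c7 := h_p1b0
  have e1a := dD1a; have e2a := dD2a; have e3a := dD3a
  cases nd with
  | n00 => exact ⟨by simp only [chR, cGlo, fm1p1]; linarith,
      by simp only [chR, cGlo, cGhi, fm1p1, fm1q2]; exact h_d1⟩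
  | n01 => exact ⟨by simp only [chR, cGlo, fm2p1]; linarith,
      by simp only [chR, cGlo, cGhi, fm2p1, fm2q2]; exact h_d2⟩
  | n02 => exact ⟨by simp only [chR, cGlo, fm3p1]; exact h_d3lo_pos,
      by simp only [chR, cGlo, cGhi, fm3p1, fm3q2]; exact h_d3⟩
  | n10 => exact ⟨by simp only [chR, cGlo, fm1p1]; linarith,
      by simp only [chR, cGlo, cGhi, fm1p1, fm1q2]; exact h_d1⟩
  | n11 => exact ⟨by simp only [chR, cGlo, fm2p1]; linarith,
      by simp only [chR, cGlo, cGhi, fm2p1, fm2q2]; exact h_d2⟩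

lemma max_sub_min (x y : ℝ) : max x y - min x y = |y - x| := by
  rcases le_total x y with h | h
  · rw [max_eq_right h, min_eq_left h, abs_of_nonneg (by linarith)]
  · rw [max_eq_left h, min_eq_right h, abs_of_nonpos (by linarith), neg_sub]

lemma gapLen_eq (X : Side) {m : Mob} (hm : MobOK X.w m) :
    gapLen X = elen m.ga m.de (gL X.nd) (gH X.nd) := by
  have h := nd_ord X.nd
  rw [gapLen, ghi, glo, max_sub_min, E_abs hm (by linarith) h.2.2.1.le]

lemma pLen_eq (X : Side) {m : Mob} (hm : MobOK X.w m) :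
    pLen X = elen m.ga m.de (bL X.nd) (bH X.nd) := by
  have h := nd_ord X.nd
  rw [pLen, hi, lo, max_sub_min, E_abs hm (by linarith) (by linarith)]

lemma childGap_eq (X : Side) (c : Node ⊕ ℕ) (h : okCh (stOf X.nd) c)
    (hc : 0 < cGlo c ∧ cGlo c < cGhi c) {m : Mob} (hm : MobOK X.w m) :
    gapLen (mkChild X c h) = elen m.ga m.de (cGlo c) (cGhi c) := by
  rw [gapLen, mk_ghi, mk_glo, max_sub_min, E_abs hm hc.1.le hc.2.le]

lemma pack (X : Side) : ∃ P Q : Side,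
    lo P = lo X ∧ hi P = glo X ∧ lo Q = ghi X ∧ hi Q = hi X ∧
    gapLen P ≤ gapLen X ∧ gapLen Q ≤ gapLen X ∧ rank X < rank P ∧ rank X < rank Q ∧
    lo X < glo X ∧ glo X < ghi X ∧ ghi X < hi X ∧
    gapLen X ≤ glo X - lo X ∧ gapLen X ≤ hi X - ghi X := by
  obtain ⟨m, hm⟩ := mob_exists X.w false X.hadm
  have hga : 0 ≤ m.ga := hm.2.2.2.1
  have hgade : m.ga ≤ m.de := hm.2.2.2.2.1
  have hde : 1 ≤ m.de := hm.2.2.2.2.2.1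
  have hep : m.ep = 1 ∨ m.ep = -1 := hm.2.2.2.2.2.2.1
  have hord := nd_ord X.nd
  have htc := tau_chain X.nd hga hgade hde
  have h0 : (0:ℝ) ≤ bL X.nd := hord.1.le
  have h0g : (0:ℝ) ≤ gL X.nd := by linarith [hord.1, hord.2.1]
  have h0h : (0:ℝ) ≤ gH X.nd := by linarith [hord.1, hord.2.1, hord.2.2.1]
  have h0b : (0:ℝ) ≤ bH X.nd := by linarith [hord.1, hord.2.1, hord.2.2.1, hord.2.2.2]
  have dAB := E_diff hm h0 h0g
  have dBC := E_diff hm h0g h0h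
  have dCD := E_diff hm h0h h0b
  have eAB := elen_pos hga hde h0 hord.2.1
  have eBC := elen_pos hga hde h0g hord.2.2.1
  have eCD := elen_pos hga hde h0h hord.2.2.2
  have gX : gapLen X = elen m.ga m.de (gL X.nd) (gH X.nd) := gapLen_eq X hm
  -- the two children
  set P1 : Side := mkChild X (chL X.nd) (okChL X.nd) with hP1
  set Q1 : Side := mkChild X (chR X.nd) (okChR X.nd) with hQ1
  have gP1 : gapLen P1 ≤ gapLen X := by
    rw [childGap_eq X _ _ (ch_gap_ordL X.nd) hm, gX]; exact htc.2.2.1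
  have gQ1 : gapLen Q1 ≤ gapLen X := by
    rw [childGap_eq X _ _ (ch_gap_ordR X.nd) hm, gX]; exact htc.2.2.2
  have rP1 : rank X < rank P1 := mk_rankL X _
  have rQ1 : rank X < rank Q1 := mk_rankR X _
  have loP1 : lo P1 = min (E X.w (bL X.nd)) (E X.w (gL X.nd)) := by
    rw [hP1, mk_lo, (chL_ends X.nd).1, (chL_ends X.nd).2]
  have hiP1 : hi P1 = max (E X.w (bL X.nd)) (E X.w (gL X.nd)) := by
    rw [hP1, mk_hi, (chL_ends X.nd).1, (chL_ends X.nd).2]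
  have loQ1 : lo Q1 = min (E X.w (gH X.nd)) (E X.w (bH X.nd)) := by
    rw [hQ1, mk_lo, (chR_ends X.nd).1, (chR_ends X.nd).2]
  have hiQ1 : hi Q1 = max (E X.w (gH X.nd)) (E X.w (bH X.nd)) := by
    rw [hQ1, mk_hi, (chR_ends X.nd).1, (chR_ends X.nd).2]
  rcases hep with he | he
  · -- increasing orientation
    rw [he, one_mul] at dAB dBC dCD
    have oAB : E X.w (bL X.nd) < E X.w (gL X.nd) := by linarith
    have oBC : E X.w (gL X.nd) < E X.w (gH X.nd) := by linarith
    have oCD : E X.w (gH X.nd) < E X.w (bH X.nd) := by linarith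
    have hlo : lo X = E X.w (bL X.nd) := min_eq_left (by linarith)
    have hhi : hi X = E X.w (bH X.nd) := max_eq_right (by linarith)
    have hglo : glo X = E X.w (gL X.nd) := min_eq_left (by linarith)
    have hghi : ghi X = E X.w (gH X.nd) := max_eq_right (by linarith)
    refine ⟨P1, Q1, ?_, ?_, ?_, ?_, gP1, gQ1, rP1, rQ1, ?_, ?_, ?_, ?_, ?_⟩
    · rw [loP1, hlo, min_eq_left oAB.le]
    · rw [hiP1, hglo, max_eq_right oAB.le]
    · rw [loQ1, hghi, min_eq_left oCD.le]
    · rw [hiQ1, hhi, max_eq_right oCD.le]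
    · rw [hlo, hglo]; exact oAB
    · rw [hglo, hghi]; exact oBC
    · rw [hghi, hhi]; exact oCD
    · rw [gX, hglo, hlo, dAB]; exact htc.1
    · rw [gX, hghi, hhi, dCD]; exact htc.2.1
  · -- decreasing orientation
    rw [he] at dAB dBC dCD
    have oAB : E X.w (gL X.nd) < E X.w (bL X.nd) := by linarith
    have oBC : E X.w (gH X.nd) < E X.w (gL X.nd) := by linarith
    have oCD : E X.w (bH X.nd) < E X.w (gH X.nd) := by linarith
    have hlo : lo X = E X.w (bH X.nd) := min_eq_right (by linarith)
    have hhi : hi X = E X.w (bL X.nd) := max_eq_left (by linarith)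
    have hglo : glo X = E X.w (gH X.nd) := min_eq_right (by linarith)
    have hghi : ghi X = E X.w (gL X.nd) := max_eq_left (by linarith)
    refine ⟨Q1, P1, ?_, ?_, ?_, ?_, gQ1, gP1, rQ1, rP1, ?_, ?_, ?_, ?_, ?_⟩
    · rw [loQ1, hlo, min_eq_right oCD.le]
    · rw [hiQ1, hglo, max_eq_left oCD.le]
    · rw [loP1, hghi, min_eq_right oAB.le]
    · rw [hiP1, hhi, max_eq_left oAB.le]
    · rw [hlo, hglo]; exact oCD
    · rw [hglo, hghi]; exact oBC
    · rw [hghi, hhi]; exact oAB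
    · rw [gX, hglo, hlo]; linarith [htc.2.1]
    · rw [gX, hghi, hhi]; linarith [htc.1]


def Inv (s : ℝ) (X Y : Side) : Prop :=
  lo X + lo Y ≤ s ∧ s ≤ hi X + hi Y ∧ gapLen X ≤ pLen Y ∧ gapLen Y ≤ pLen X

lemma step {s : ℝ} {X Y : Side} (h : Inv s X Y) :
    ∃ X' Y' : Side, Inv s X' Y' ∧
      ((Y' = Y ∧ rank X < rank X') ∨ (X' = X ∧ rank Y < rank Y' ∧ gapLen X < gapLen Y)) := by
  obtain ⟨PX, QX, lP, hP, lQ, hQ, gPX, gQX, rPX, rQX, o1, o2, o3, tXL, tXR⟩ := pack X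
  obtain ⟨PY, QY, lP', hP', lQ', hQ', gPY, gQY, rPY, rQY, o1', o2', o3', tYL, tYR⟩ := pack Y
  obtain ⟨h1, h2, h3, h4⟩ := h
  have metX : ∃ Z : Side, (lo Z + lo Y ≤ s) ∧ (s ≤ hi Z + hi Y) ∧
      gapLen Z ≤ gapLen X ∧ gapLen X ≤ pLen Z ∧ rank X < rank Z := by
    by_cases hcx : s ≤ glo X + hi Y
    · refine ⟨PX, by rw [lP]; exact h1, by rw [hP]; exact hcx, gPX, ?_, rPX⟩
      rw [pLen, hP, lP]; exact tXL
    · have hcx' : ghi X + lo Y ≤ s := by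
        by_contra hc
        push_neg at hcx hc
        have : pLen Y < gapLen X := by
          unfold pLen gapLen; linarith
        linarith
      refine ⟨QX, by rw [lQ]; exact hcx', by rw [hQ]; exact h2, gQX, ?_, rQX⟩
      rw [pLen, hQ, lQ]; exact tXR
  have metY : ∃ Z : Side, (lo X + lo Z ≤ s) ∧ (s ≤ hi X + hi Z) ∧
      gapLen Z ≤ gapLen Y ∧ gapLen Y ≤ pLen Z ∧ rank Y < rank Z := by
    by_cases hcy : s ≤ hi X + glo Y
    · refine ⟨PY, by rw [lP']; exact h1, by rw [hP']; exact hcy, gPY, ?_, rPY⟩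
      rw [pLen, hP', lP']; exact tYL
    · have hcy' : lo X + ghi Y ≤ s := by
        by_contra hc
        push_neg at hcy hc
        have : pLen X < gapLen Y := by
          unfold pLen gapLen; linarith
        linarith
      refine ⟨QY, by rw [lQ']; exact hcy', by rw [hQ']; exact h2, gQY, ?_, rQY⟩
      rw [pLen, hQ', lQ']; exact tYR
  obtain ⟨Z, m1, m2, gc, tz, rz⟩ := metX
  obtain ⟨Z', m1', m2', gc', tz', rz'⟩ := metY
  by_cases hsel : gapLen Y ≤ pLen Z
  · exact ⟨Z, Y, ⟨m1, m2, le_trans gc h3, hsel⟩, Or.inl ⟨rfl, rz⟩⟩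
  · by_cases hsel' : gapLen X ≤ pLen Z'
    · push_neg at hsel
      exact ⟨X, Z', ⟨m1', m2', hsel', le_trans gc' h4⟩,
        Or.inr ⟨rfl, rz', by linarith⟩⟩
    · exfalso
      push_neg at hsel hsel'
      linarith


lemma gap_pos (X : Side) : 0 < gapLen X := by
  obtain ⟨P, Q, _, _, _, _, _, _, _, _, _, o2, _, _, _⟩ := pack X
  unfold gapLen; linarith

lemma gap_le_pLen (X : Side) : gapLen X ≤ pLen X := by
  obtain ⟨P, Q, _, _, _, _, _, _, _, _, o1, o2, o3, _, _⟩ := pack X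
  unfold gapLen pLen; linarith

lemma lo_le_hi (X : Side) : lo X ≤ hi X := min_le_max

lemma ndDepth_le (nd : Node) : ndDepth nd ≤ 2 := by cases nd <;> simp [ndDepth]

lemma bL_eq_Lb (nd : Node) : bL nd = Lb (stOf nd) := by cases nd <;> rfl

lemma bH_le_b0 (nd : Node) : bH nd ≤ b0 := by
  have c4 := h_q3p2; have c5 := h_p2q2; have c6 := h_q2p1; have c7 := h_p1b0
  cases nd <;> simp [bH] <;> linarith

lemma Adm_last {b : Bool} {w : List ℕ} {a : ℕ} (h : Adm b (w ++ [a])) : ok (stA b w) a := by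
  induction w generalizing b with
  | nil => exact h.1
  | cons x w ih => exact ih h.2

/-- cylinder length bound : the cylinder shrinks by 1/2 with each digit -/
lemma cyl_bound : ∀ (w : List ℕ), Adm false w →
    |E w (Lb (stA false w)) - E w b0| ≤ (b0 - a0) * (1/2)^w.length := by
  intro w
  induction w using List.reverseRecOn with
  | nil =>
    intro _
    simp only [E, stA, List.length_nil, pow_zero, mul_one, Lb]
    rw [abs_of_nonpos (by simp; linarith [h_a0q4, h_q4a1, h_a1q3, h_q3p2, h_p2q2, h_q2p1, h_p1b0])]
    simp
  | append_singleton w a ih =>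
    intro hadm
    have hadm' : Adm false w := Adm_prefix hadm
    have hok : ok (stA false w) a := Adm_last hadm
    obtain ⟨m, hm⟩ := mob_exists w false hadm'
    have hga : 0 ≤ m.ga := hm.2.2.2.1
    have hgade : m.ga ≤ m.de := hm.2.2.2.2.1
    have hde : 1 ≤ m.de := hm.2.2.2.2.2.1
    have c0 := h_a0; have c1 := h_a0q4; have c2 := h_q4a1; have c3 := h_a1q3
    have c4 := h_q3p2; have c5 := h_p2q2; have c6 := h_q2p1; have c7 := h_p1b0
    rw [stA_append, E_append, E_append]
    have key : ∀ c1' c2' : ℝ, fm a (Lb (nxt a)) = c2' → fm a b0 = c1' →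
        0 ≤ c1' → c1' ≤ c2' → Lb (stA false w) ≤ c1' → c2' ≤ b0 →
        2*(c2' - c1')*(b0+1) ≤ (b0 - Lb (stA false w))*(c2'+1) →
        |E w (fm a (Lb (nxt a))) - E w (fm a b0)| ≤ (b0 - a0) * (1/2) ^ (w ++ [a]).length := by
      intro c1' c2' h2' h1' hpos hle hLb hub hsc
      rw [h1', h2'] at *
      have habs : |E w c2' - E w c1'| = elen m.ga m.de c1' c2' := E_abs hm hpos hle
      rw [habs]
      have hhalf : elen m.ga m.de c1' c2' ≤ (1/2) * elen m.ga m.de (Lb (stA false w)) b0 :=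
        lenH hga hgade hde (Lb_pos _).le hLb hle hub hsc
      have hcyl : elen m.ga m.de (Lb (stA false w)) b0
          = |E w (Lb (stA false w)) - E w b0| := by
        rw [abs_sub_comm, E_abs hm (Lb_pos _).le (Lb_le_b0 _)]
      have hih := ih hadm'
      rw [hcyl] at hhalf
      calc elen m.ga m.de c1' c2' ≤ (1/2) * |E w (Lb (stA false w)) - E w b0| := hhalf
        _ ≤ (1/2) * ((b0 - a0) * (1/2)^w.length) := by
            linarith [abs_nonneg (E w (Lb (stA false w)) - E w b0)]
        _ = (b0 - a0) * (1/2)^(w ++ [a]).length := by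
            simp [List.length_append]; ring
    rcases hst : stA false w with _ | _ <;> rw [hst] at hok
    · have ha1 := hok.1; have ha4 := hok.2.1
      interval_cases a
      · exact key p1 b0 (by simp [nxt, Lb]; exact fm1a1) fm1b0 (by linarith)
          (by linarith) (by rw [hst]; simp [Lb]; linarith) (by linarith)
          (by rw [hst]; simp [Lb]; linarith [hH1])
      · exact key p2 q2 (by simp [nxt, Lb]; exact fm2a0) fm2b0 (by linarith)
          (by linarith) (by rw [hst]; simp [Lb]; linarith) (by linarith)
          (by rw [hst]; simp [Lb]; linarith [hH2])
      · exact key a1 q3 (by simp [nxt, Lb]; exact fm3a0) fm3b0 (by linarith)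
          (by linarith) (by rw [hst]; simp [Lb]; linarith) (by linarith)
          (by rw [hst]; simp [Lb]; linarith [hH3])
      · exact key a0 q4 (by simp [nxt, Lb]; exact fm4a0) fm4b0 (by linarith)
          (by linarith) (by rw [hst]; simp [Lb]) (by linarith)
          (by rw [hst]; simp [Lb]; linarith [hH4])
    · have ha1 := hok.1; have ha3 := hok.2.2 rfl
      interval_cases a
      · exact key p1 b0 (by simp [nxt, Lb]; exact fm1a1) fm1b0 (by linarith)
          (by linarith) (by rw [hst]; simp [Lb]; linarith) (by linarith)
          (by rw [hst]; simp [Lb]; linarith [hH5])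
      · exact key p2 q2 (by simp [nxt, Lb]; exact fm2a0) fm2b0 (by linarith)
          (by linarith) (by rw [hst]; simp [Lb]; linarith) (by linarith)
          (by rw [hst]; simp [Lb]; linarith [hH6])
      · exact key a1 q3 (by simp [nxt, Lb]; exact fm3a0) fm3b0 (by linarith)
          (by linarith) (by rw [hst]; simp [Lb]) (by linarith)
          (by rw [hst]; simp [Lb]; linarith [hH7])

lemma pLen_le (X : Side) : pLen X ≤ (b0 - a0) * (1/2)^X.w.length := by
  obtain ⟨m, hm⟩ := mob_exists X.w false X.hadm
  have hga : 0 ≤ m.ga := hm.2.2.2.1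
  have hde : 1 ≤ m.de := hm.2.2.2.2.2.1
  have hord := nd_ord X.nd
  have hb0 : bH X.nd ≤ b0 := bH_le_b0 X.nd
  have hbLLb : bL X.nd = Lb (stA false X.w) := by rw [bL_eq_Lb, X.hst]
  have h1 : pLen X = elen m.ga m.de (bL X.nd) (bH X.nd) := pLen_eq X hm
  have h2 : elen m.ga m.de (bL X.nd) (bH X.nd) ≤ elen m.ga m.de (bL X.nd) b0 :=
    lenMono hga hde hord.1.le (le_refl _)
      (by linarith [hord.2.1, hord.2.2.1, hord.2.2.2]) hb0
  have h3 : elen m.ga m.de (bL X.nd) b0 = |E X.w (Lb (stA false X.w)) - E X.w b0| := by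
    rw [abs_sub_comm, hbLLb.symm, E_abs hm hord.1.le (by linarith [hord.2.1, hord.2.2.1, hord.2.2.2, hb0])]
  rw [h1]
  calc elen m.ga m.de (bL X.nd) (bH X.nd) ≤ elen m.ga m.de (bL X.nd) b0 := h2
    _ = |E X.w (Lb (stA false X.w)) - E X.w b0| := h3
    _ ≤ (b0 - a0) * (1/2)^X.w.length := cyl_bound X.w X.hadm


structure DState (s : ℝ) where
  X : Side
  Y : Side
  inv : Inv s X Y

noncomputable def dnext {s : ℝ} (g : DState s) : DState s :=
  ⟨(step g.inv).choose, (step g.inv).choose_spec.choose,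
    (step g.inv).choose_spec.choose_spec.1⟩

lemma dnext_spec {s : ℝ} (g : DState s) :
    ((dnext g).Y = g.Y ∧ rank g.X < rank (dnext g).X) ∨
    ((dnext g).X = g.X ∧ rank g.Y < rank (dnext g).Y ∧ gapLen g.X < gapLen g.Y) :=
  (step g.inv).choose_spec.choose_spec.2

noncomputable def chain {s : ℝ} (g0 : DState s) : ℕ → DState s
  | 0 => g0
  | n+1 => dnext (chain g0 n)

lemma chain_succ {s : ℝ} (g0 : DState s) (n : ℕ) :
    chain g0 (n+1) = dnext (chain g0 n) := rfl

lemma rank_mono_step {s : ℝ} (g0 : DState s) (n : ℕ) :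
    rank (chain g0 n).X ≤ rank (chain g0 (n+1)).X ∧
    rank (chain g0 n).Y ≤ rank (chain g0 (n+1)).Y := by
  rcases dnext_spec (chain g0 n) with ⟨hy, hx⟩ | ⟨hx, hy, _⟩
  · exact ⟨hx.le, by rw [chain_succ, hy]⟩
  · exact ⟨by rw [chain_succ, hx], hy.le⟩

lemma rank_mono {s : ℝ} (g0 : DState s) {m n : ℕ} (h : m ≤ n) :
    rank (chain g0 m).X ≤ rank (chain g0 n).X ∧
    rank (chain g0 m).Y ≤ rank (chain g0 n).Y := by
  induction n with
  | zero => simp_all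
  | succ n ih =>
    rcases Nat.eq_or_lt_of_le h with h1 | h2
    · rw [h1]; exact ⟨le_refl _, le_refl _⟩
    · have := ih (Nat.lt_succ_iff.1 h2)
      exact ⟨le_trans this.1 (rank_mono_step g0 n).1, le_trans this.2 (rank_mono_step g0 n).2⟩

lemma mono_bdd_stab (f : ℕ → ℕ) (hmono : ∀ m n, m ≤ n → f m ≤ f n) (B : ℕ)
    (hbdd : ∀ n, f n ≤ B) : ∃ N, ∀ n, N ≤ n → f n = f N := by
  by_contra hc
  push_neg at hc
  have grow : ∀ j, ∃ n, j ≤ f n := by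
    intro j
    induction j with
    | zero => exact ⟨0, Nat.zero_le _⟩
    | succ j ih =>
      obtain ⟨n, hn⟩ := ih
      obtain ⟨n', hn', hne⟩ := hc n
      have h1 : f n ≤ f n' := hmono n n' hn'
      have h2 : f n ≠ f n' := fun h => hne h.symm
      exact ⟨n', by omega⟩
  obtain ⟨n, hn⟩ := grow (B+1)
  have := hbdd n
  omega

lemma len_of_rank {X : Side} {k : ℕ} (h : 3*k + 3 ≤ rank X) : k + 1 ≤ X.w.length := by
  have := ndDepth_le X.nd
  unfold rank at h
  omega

lemma small_pLen (ε : ℝ) (hε : 0 < ε) : ∃ k : ℕ, ∀ X : Side, 3*k + 3 ≤ rank X → pLen X < ε := by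
  have hba : (0:ℝ) < b0 - a0 := by
    have c1 := h_a0q4; have c2 := h_q4a1; have c3 := h_a1q3
    have c4 := h_q3p2; have c5 := h_p2q2; have c6 := h_q2p1; have c7 := h_p1b0
    linarith
  obtain ⟨k, hk⟩ := exists_pow_lt_of_lt_one (div_pos hε hba) (by norm_num : (1:ℝ)/2 < 1)
  refine ⟨k, fun X hX => ?_⟩
  have hlen : k + 1 ≤ X.w.length := len_of_rank hX
  have h1 : pLen X ≤ (b0 - a0) * (1/2)^X.w.length := pLen_le X
  have h2 : ((1:ℝ)/2)^X.w.length ≤ (1/2)^k := by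
    apply pow_le_pow_of_le_one (by norm_num) (by norm_num)
    omega
  have h3 : (b0 - a0) * (1/2)^X.w.length ≤ (b0 - a0) * (1/2)^k := by
    apply mul_le_mul_of_nonneg_left h2 hba.le
  have h4 : (b0 - a0) * ((1:ℝ)/2)^k < ε := by
    rw [← lt_div_iff₀' hba]
    exact hk
  linarith

lemma rankX_unbounded {s : ℝ} (g0 : DState s) : ∀ k, ∃ n, k ≤ rank (chain g0 n).X := by
  intro k
  by_contra hc
  push_neg at hc
  obtain ⟨N, hN⟩ := mono_bdd_stab (fun n => rank (chain g0 n).X)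
    (fun m n h => (rank_mono g0 h).1) k (fun n => (hc n).le)
  -- X is constant from N on
  have hXconst : ∀ n, N ≤ n → (chain g0 n).X = (chain g0 N).X := by
    intro n hn
    induction n, hn using Nat.le_induction with
    | base => rfl
    | succ n hn ih =>
      rcases dnext_spec (chain g0 n) with ⟨hy, hx⟩ | ⟨hx, _, _⟩
      · exfalso
        have e1 := hN n hn
        have e2 := hN (n+1) (by omega)
        rw [chain_succ] at e2
        omega
      · rw [chain_succ, hx, ih]
  -- every step from N on is a Y-step, with gap comparison
  have hYstep : ∀ n, N ≤ n → gapLen (chain g0 N).X < gapLen (chain g0 n).Y ∧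
      rank (chain g0 n).Y < rank (chain g0 (n+1)).Y := by
    intro n hn
    rcases dnext_spec (chain g0 n) with ⟨hy, hx⟩ | ⟨hx, hy, hg⟩
    · exfalso
      have e1 := hN n hn
      have e2 := hN (n+1) (by omega)
      rw [chain_succ] at e2
      omega
    · rw [← hXconst n hn]
      exact ⟨hg, hy⟩
  -- rank of Y grows without bound
  have hYgrow : ∀ j, rank (chain g0 N).Y + j ≤ rank (chain g0 (N+j)).Y := by
    intro j
    induction j with
    | zero => simp
    | succ j ih =>
      have := (hYstep (N+j) (by omega)).2
      have h2 : N + (j+1) = (N+j) + 1 := by omega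
      rw [h2]
      omega
  -- contradiction via shrinking pieces
  have hgap : 0 < gapLen (chain g0 N).X := gap_pos _
  obtain ⟨kk, hkk⟩ := small_pLen _ hgap
  set n := N + (3*kk + 3) with hn
  have h1 : 3*kk + 3 ≤ rank (chain g0 n).Y := by
    have := hYgrow (3*kk + 3)
    rw [hn]
    omega
  have h2 : pLen (chain g0 n).Y < gapLen (chain g0 N).X := hkk _ h1
  have h3 : gapLen (chain g0 N).X < gapLen (chain g0 n).Y := (hYstep n (by omega)).1
  have h4 : gapLen (chain g0 n).Y ≤ pLen (chain g0 n).Y := gap_le_pLen _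
  linarith

lemma rankY_unbounded {s : ℝ} (g0 : DState s) : ∀ k, ∃ n, k ≤ rank (chain g0 n).Y := by
  intro k
  by_contra hc
  push_neg at hc
  obtain ⟨N, hN⟩ := mono_bdd_stab (fun n => rank (chain g0 n).Y)
    (fun m n h => (rank_mono g0 h).2) k (fun n => (hc n).le)
  have hYconst : ∀ n, N ≤ n → (chain g0 n).Y = (chain g0 N).Y := by
    intro n hn
    induction n, hn using Nat.le_induction with
    | base => rfl
    | succ n hn ih =>
      rcases dnext_spec (chain g0 n) with ⟨hy, hx⟩ | ⟨hx, hy, _⟩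
      · rw [chain_succ, hy, ih]
      · exfalso
        have e1 := hN n hn
        have e2 := hN (n+1) (by omega)
        rw [chain_succ] at e2
        omega
  have hXstep : ∀ n, N ≤ n → rank (chain g0 n).X < rank (chain g0 (n+1)).X := by
    intro n hn
    rcases dnext_spec (chain g0 n) with ⟨hy, hx⟩ | ⟨hx, hy, _⟩
    · exact hx
    · exfalso
      have e1 := hN n hn
      have e2 := hN (n+1) (by omega)
      rw [chain_succ] at e2
      omega
  have hXgrow : ∀ j, rank (chain g0 N).X + j ≤ rank (chain g0 (N+j)).X := by
    intro j
    induction j with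
    | zero => simp
    | succ j ih =>
      have := hXstep (N+j) (by omega)
      have h2 : N + (j+1) = (N+j) + 1 := by omega
      rw [h2]
      omega
  have hgap : 0 < gapLen (chain g0 N).Y := gap_pos _
  obtain ⟨kk, hkk⟩ := small_pLen _ hgap
  set n := N + (3*kk + 3) with hn
  have h1 : 3*kk + 3 ≤ rank (chain g0 n).X := by
    have := hXgrow (3*kk + 3)
    rw [hn]
    omega
  have h2 : pLen (chain g0 n).X < gapLen (chain g0 N).Y := hkk _ h1
  have h3 : gapLen (chain g0 n).Y ≤ pLen (chain g0 n).X := (chain g0 n).inv.2.2.2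
  have h4 : gapLen (chain g0 N).Y = gapLen (chain g0 n).Y := by
    rw [hYconst n (by omega)]
  linarith


lemma E_between {w : List ℕ} {m : Mob} (hm : MobOK w m) {zl zh z : ℝ}
    (h0 : 0 ≤ zl) (h1 : zl ≤ z) (h2 : z ≤ zh) :
    min (E w zl) (E w zh) ≤ E w z ∧ E w z ≤ max (E w zl) (E w zh) := by
  have hz : 0 ≤ z := le_trans h0 h1
  have hzh : 0 ≤ zh := le_trans hz h2
  have hga : 0 ≤ m.ga := hm.2.2.2.1
  have hde : 1 ≤ m.de := hm.2.2.2.2.2.1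
  have d1 := E_diff hm h0 hz
  have d2 := E_diff hm hz hzh
  have e1 := elen_nonneg hga hde h0 h1
  have e2 := elen_nonneg hga hde hz h2
  rcases hm.2.2.2.2.2.2.1 with he | he <;> rw [he] at d1 d2
  · constructor
    · exact le_trans (min_le_left _ _) (by nlinarith)
    · exact le_trans (by nlinarith) (le_max_right _ _)
  · constructor
    · exact le_trans (min_le_right _ _) (by nlinarith)
    · exact le_trans (by nlinarith) (le_max_left _ _)

lemma fm_flip_min {a : ℕ} (ha : 1 ≤ a) {u v : ℝ} (hu : 0 ≤ u) (hv : 0 ≤ v) :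
    min (fm a u) (fm a v) = fm a (max u v) ∧ max (fm a u) (fm a v) = fm a (min u v) := by
  rcases le_total u v with h | h
  · rw [max_eq_right h, min_eq_left h, min_eq_right (fm_le_fm ha hu h),
      max_eq_left (fm_le_fm ha hu h)]
    exact ⟨rfl, rfl⟩
  · rw [max_eq_left h, min_eq_right h, min_eq_left (fm_le_fm ha hv h),
      max_eq_right (fm_le_fm ha hv h)]
    exact ⟨rfl, rfl⟩

lemma cyl_sub_S : ∀ (w : List ℕ) (b : Bool), Adm b w →
    Set.Icc (min (E w (Lb (stA b w))) (E w b0)) (max (E w (Lb (stA b w))) (E w b0))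
      ⊆ S w.length b := by
  intro w
  induction w with
  | nil =>
    intro b _
    show Set.Icc (min (Lb b) b0) (max (Lb b) b0) ⊆ Set.Icc (Lb b) b0
    rw [min_eq_left (Lb_le_b0 b), max_eq_right (Lb_le_b0 b)]
  | cons a w ih =>
    intro b hadm
    intro x hx
    have hadm' : Adm (nxt a) w := hadm.2
    have ha1 : 1 ≤ a := hadm.1.1
    have haR : (1:ℝ) ≤ (a:ℝ) := by exact_mod_cast ha1
    set u := E w (Lb (stA (nxt a) w)) with hu_def
    set v := E w b0 with hv_def
    have hu : Lb (nxt a) ≤ u ∧ u ≤ b0 :=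
      E_in_hull w (nxt a) hadm' _ (le_refl _) (Lb_le_b0 _)
    have hv : Lb (nxt a) ≤ v ∧ v ≤ b0 :=
      E_in_hull w (nxt a) hadm' b0 (Lb_le_b0 _) (le_refl _)
    have hu0 : 0 < u := lt_of_lt_of_le (Lb_pos _) hu.1
    have hv0 : 0 < v := lt_of_lt_of_le (Lb_pos _) hv.1
    have hflip := fm_flip_min ha1 hu0.le hv0.le
    have hxx : x ∈ Set.Icc (fm a (max u v)) (fm a (min u v)) := by
      have e1 : E (a :: w) (Lb (stA b (a :: w))) = fm a u := rfl
      have e2 : E (a :: w) b0 = fm a v := rfl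
      rw [Set.mem_Icc] at hx ⊢
      rw [e1, e2] at hx
      rw [← hflip.1, ← hflip.2]
      exact hx
    have hmax0 : 0 < max u v := lt_max_of_lt_left hu0
    have hmin0 : 0 < min u v := lt_min hu0 hv0
    have hdenmax : 0 < (a:ℝ) + max u v := by linarith
    have hdenmin : 0 < (a:ℝ) + min u v := by linarith
    have hx0 : 0 < x := by
      have : 0 < fm a (max u v) := by unfold fm; positivity
      exact lt_of_lt_of_le this hxx.1
    set y := 1/x - a with hy_def
    have hyhi : y ≤ max u v := by
      have : fm a (max u v) ≤ x := hxx.1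
      unfold fm at this
      have h1x : 1/x ≤ (a:ℝ) + max u v := by
        rw [div_le_iff₀ hx0]
        rw [div_le_iff₀ hdenmax] at this
        nlinarith
      rw [hy_def]; linarith
    have hylo : min u v ≤ y := by
      have : x ≤ fm a (min u v) := hxx.2
      unfold fm at this
      have h1x : (a:ℝ) + min u v ≤ 1/x := by
        rw [le_div_iff₀ hx0]
        rw [le_div_iff₀ hdenmin] at this
        nlinarith
      rw [hy_def]; linarith
    have hyS : y ∈ S w.length (nxt a) := ih (nxt a) hadm' ⟨hylo, hyhi⟩
    have hxy : x = fm a y := by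
      rw [hy_def]; unfold fm
      rw [add_sub_cancel]
      exact (one_div_one_div x).symm
    show x ∈ S (w.length + 1) b
    simp only [S, Set.mem_iUnion]
    exact ⟨a, hadm.1, y, hyS, hxy.symm⟩

lemma piece_sub_S (X : Side) : Set.Icc (lo X) (hi X) ⊆ S X.w.length false := by
  obtain ⟨m, hm⟩ := mob_exists X.w false X.hadm
  have hord := nd_ord X.nd
  have hbLLb : bL X.nd = Lb (stA false X.w) := by rw [bL_eq_Lb, X.hst]
  have hBin : Lb (stA false X.w) ≤ bL X.nd ∧ bL X.nd ≤ b0 := by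
    rw [← hbLLb]
    exact ⟨le_refl _, by linarith [bH_le_b0 X.nd, hord.2.1, hord.2.2.1, hord.2.2.2]⟩
  have hHin : Lb (stA false X.w) ≤ bH X.nd ∧ bH X.nd ≤ b0 := by
    rw [← hbLLb]
    exact ⟨by linarith [hord.2.1, hord.2.2.1, hord.2.2.2], bH_le_b0 X.nd⟩
  have h0 : (0:ℝ) ≤ Lb (stA false X.w) := (Lb_pos _).le
  have e1 := E_between hm h0 hBin.1 hBin.2
  have e2 := E_between hm h0 hHin.1 hHin.2
  have hsub : Set.Icc (lo X) (hi X) ⊆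
      Set.Icc (min (E X.w (Lb (stA false X.w))) (E X.w b0))
        (max (E X.w (Lb (stA false X.w))) (E X.w b0)) := by
    apply Set.Icc_subset_Icc
    · exact le_min e1.1 e2.1
    · exact max_le e1.2 e2.2
  exact le_trans hsub (cyl_sub_S X.w false X.hadm)

lemma interval_split {A B Cc D s : ℝ} (hAB : A ≤ B) (hCD : Cc ≤ D)
    (h1 : A + Cc ≤ s) (h2 : s ≤ B + D) :
    ∃ x y : ℝ, A ≤ x ∧ x ≤ B ∧ Cc ≤ y ∧ y ≤ D ∧ x + y = s := by
  refine ⟨max A (s - D), s - max A (s - D), le_max_left _ _, ?_, ?_, ?_, by ring⟩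
  · exact max_le hAB (by linarith)
  · have : max A (s - D) ≤ s - Cc := max_le (by linarith) (by linarith)
    linarith
  · have : s - D ≤ max A (s - D) := le_max_right _ _
    linarith


lemma S_compact : ∀ (n : ℕ) (b : Bool), IsCompact (S n b) := by
  intro n
  induction n with
  | zero => intro b; exact isCompact_Icc
  | succ n ih =>
    intro b
    have hrw : S (n+1) b = ⋃ a ∈ ({1,2,3,4} : Finset ℕ), ⋃ (_ : ok b a), fm a '' S n (nxt a) := by
      ext x
      simp only [S, Set.mem_iUnion, Finset.mem_insert, Finset.mem_singleton]
      constructor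
      · rintro ⟨a, hok, hx⟩
        refine ⟨a, ?_, hok, hx⟩
        have h1 := hok.1; have h4 := hok.2.1
        omega
      · rintro ⟨a, _, hok, hx⟩
        exact ⟨a, hok, hx⟩
    rw [hrw]
    apply (Finset.finite_toSet _).isCompact_biUnion
    intro a _
    by_cases hok : ok b a
    · have : (⋃ (_ : ok b a), fm a '' S n (nxt a)) = fm a '' S n (nxt a) := by
        simp [hok]
      rw [this]
      apply IsCompact.image_of_continuousOn (ih (nxt a))
      apply ContinuousOn.div continuousOn_const
        ((continuous_const.add continuous_id).continuousOn)
      intro t ht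
      have h1 := S_sub_hull n (nxt a) ht
      have h2 := Lb_pos (nxt a)
      have ha1 : (1:ℝ) ≤ (a:ℝ) := by exact_mod_cast hok.1
      have : (0:ℝ) < (a:ℝ) + t := by
        have := h1.1
        linarith
      exact ne_of_gt this
    · have : (⋃ (_ : ok b a), fm a '' S n (nxt a)) = (∅ : Set ℝ) := by
        simp [hok]
      rw [this]
      exact isCompact_empty

/-- the base side for the descent -/
noncomputable def side0 : Side := ⟨[], n00, trivial, rfl⟩

lemma side0_facts : lo side0 = a0 ∧ hi side0 = b0 ∧ gapLen side0 = p1 - q2 := by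
  have c0 := h_a0; have c1 := h_a0q4; have c2 := h_q4a1; have c3 := h_a1q3
  have c4 := h_q3p2; have c5 := h_p2q2; have c6 := h_q2p1; have c7 := h_p1b0
  refine ⟨?_, ?_, ?_⟩
  · show min (E [] (bL n00)) (E [] (bH n00)) = a0
    show min a0 b0 = a0
    exact min_eq_left (by linarith)
  · show max (E [] (bL n00)) (E [] (bH n00)) = b0
    show max a0 b0 = b0
    exact max_eq_right (by linarith)
  · show max (E [] (gL n00)) (E [] (gH n00)) - min (E [] (gL n00)) (E [] (gH n00)) = p1 - q2
    show max q2 p1 - min q2 p1 = p1 - q2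
    rw [max_eq_right (by linarith), min_eq_left (by linarith)]

lemma covering {s : ℝ} (hs1 : 2*a0 ≤ s) (hs2 : s ≤ 2*b0) :
    ∃ x y : ℝ, x ∈ C false ∧ y ∈ C false ∧ x + y = s := by
  have c0 := h_a0; have c1 := h_a0q4; have c2 := h_q4a1; have c3 := h_a1q3
  have c4 := h_q3p2; have c5 := h_p2q2; have c6 := h_q2p1; have c7 := h_p1b0
  obtain ⟨hlo0, hhi0, hgap0⟩ := side0_facts
  have hInv : Inv s side0 side0 := by
    refine ⟨?_, ?_, ?_, ?_⟩
    · rw [hlo0]; linarith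
    · rw [hhi0]; linarith
    · rw [hgap0]; unfold pLen; rw [hlo0, hhi0]; linarith
    · rw [hgap0]; unfold pLen; rw [hlo0, hhi0]; linarith
  set g0 : DState s := ⟨side0, side0, hInv⟩ with hg0
  have key : ∀ n : ℕ, ∃ p : ℝ × ℝ, p.1 ∈ S n false ∧ p.2 ∈ S n false ∧ p.1 + p.2 = s := by
    intro n
    obtain ⟨n1, hn1⟩ := rankX_unbounded g0 (3*n + 3)
    obtain ⟨n2, hn2⟩ := rankY_unbounded g0 (3*n + 3)
    have hrX : 3*n+3 ≤ rank (chain g0 (max n1 n2)).X :=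
      le_trans hn1 (rank_mono g0 (le_max_left _ _)).1
    have hrY : 3*n+3 ≤ rank (chain g0 (max n1 n2)).Y :=
      le_trans hn2 (rank_mono g0 (le_max_right _ _)).2
    have hinv := (chain g0 (max n1 n2)).inv
    obtain ⟨x, y, hx1, hx2, hy1, hy2, hxy⟩ :=
      interval_split (lo_le_hi (chain g0 (max n1 n2)).X) (lo_le_hi (chain g0 (max n1 n2)).Y)
        hinv.1 hinv.2.1
    refine ⟨(x, y), ?_, ?_, hxy⟩
    · apply S_mono (show n ≤ (chain g0 (max n1 n2)).X.w.length from by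
        have := len_of_rank hrX; omega) false
      exact piece_sub_S _ ⟨hx1, hx2⟩
    · apply S_mono (show n ≤ (chain g0 (max n1 n2)).Y.w.length from by
        have := len_of_rank hrY; omega) false
      exact piece_sub_S _ ⟨hy1, hy2⟩
  set K : ℕ → Set (ℝ × ℝ) :=
    fun n => {p : ℝ × ℝ | p.1 ∈ S n false ∧ p.2 ∈ S n false ∧ p.1 + p.2 = s} with hK
  have hKc : ∀ n, IsCompact (K n) := by
    intro n
    have hrw : K n = ((S n false) ×ˢ (S n false)) ∩ {p : ℝ × ℝ | p.1 + p.2 = s} := by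
      ext p
      simp only [hK, Set.mem_inter_iff, Set.mem_prod, Set.mem_setOf_eq]
      tauto
    rw [hrw]
    exact ((S_compact n false).prod (S_compact n false)).inter_right
      (isClosed_eq (continuous_fst.add continuous_snd) continuous_const)
  have hKd : ∀ n, K (n+1) ⊆ K n := fun n p hp =>
    ⟨S_succ_sub n false hp.1, S_succ_sub n false hp.2.1, hp.2.2⟩
  have hKne : ∀ n, (K n).Nonempty := fun n => by
    obtain ⟨p, h⟩ := key n
    exact ⟨p, h⟩
  have hKcl : ∀ n, IsClosed (K n) := fun n => (hKc n).isClosed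
  obtain ⟨p, hp⟩ :=
    IsCompact.nonempty_iInter_of_sequence_nonempty_isCompact_isClosed K hKd hKne (hKc 0) hKcl
  refine ⟨p.1, p.2, ?_, ?_, (Set.mem_iInter.1 hp 0).2.2⟩
  · exact Set.mem_iInter.2 fun n => (Set.mem_iInter.1 hp n).1
  · exact Set.mem_iInter.2 fun n => (Set.mem_iInter.1 hp n).2.1

lemma width_ge_one : 2*a0 + 1 ≤ 2*b0 := by
  unfold a0 b0; linarith [rt_lb]

end NICF5

theorem nicf5_add_nicf5_eq_real (x : ℝ) :
    ∃ u v : ℝ, x = u + v ∧ u ∈ NICFset 5 ∧ v ∈ NICFset 5 := by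
  set k : ℤ := ⌊x - 2*NICF5.a0⌋ with hk
  have hk1 : (k:ℝ) ≤ x - 2*NICF5.a0 := Int.floor_le _
  have hk2 : x - 2*NICF5.a0 < k + 1 := Int.lt_floor_add_one _
  have hw := NICF5.width_ge_one
  have hs1 : 2*NICF5.a0 ≤ x - k := by linarith
  have hs2 : x - k ≤ 2*NICF5.b0 := by linarith
  obtain ⟨t1, t2, h1, h2, h12⟩ := NICF5.covering hs1 hs2
  refine ⟨(k:ℝ) + t1, t2, by linarith, NICF5.mem_NICFset k h1, ?_⟩
  have := NICF5.mem_NICFset (0:ℤ) h2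
  simpa using this
end

section
/- Let n ≥ 2 and for each j = 1, …, n let (l^j, r^j) be a Cantor-set construction with Cantor set C_j and initial interval I_1^j = [l^j(1), r^j(1)], and let x_1, …, x_n > 0 be reals such that each construction has density ratio at least x_j. Assume (i) Σ_{j=1}^n x_j/(x_j + 1) ≥ 1 and (ii) for all j, k: length(I_1^j) ≥ (x_j/(x_j + 1))·((x_k + 1)/(2x_k + 1))·length(I_1^k). Then I_1^1 + ⋯ + I_1^n = {Σ_{j=1}^n y_j : y_j ∈ C_j} (pointwise sums of sets). -/
open Pointwise

/-- A Cantor-set construction on `ℝ`: functions `l r : ℕ → ℝ` (only indices `i ≥ 1` matter)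
with, for every `i ≥ 1`: `l i < r i`, `l (2i) = l i`, `r (2i+1) = r i`, `r (2i) < l (2i+1)`.
The interval `I_i` is `[l i, r i]` and the gap `G_i` is `(r (2i), l (2i+1))`. -/
structure CantorConstr where
  l : ℕ → ℝ
  r : ℕ → ℝ
  lt : ∀ i : ℕ, 1 ≤ i → l i < r i
  left_eq : ∀ i : ℕ, 1 ≤ i → l (2 * i) = l i
  right_eq : ∀ i : ℕ, 1 ≤ i → r (2 * i + 1) = r i
  gap_lt : ∀ i : ℕ, 1 ≤ i → r (2 * i) < l (2 * i + 1)

/-- The Cantor set associated to a construction: the initial interval minus all the gaps. -/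
def CantorConstr.cantorSet (c : CantorConstr) : Set ℝ :=
  Set.Icc (c.l 1) (c.r 1) \ ⋃ (i : ℕ) (_ : 1 ≤ i), Set.Ioo (c.r (2 * i)) (c.l (2 * i + 1))

/-- The construction has density ratio at least `x`. -/
def CantorConstr.densityGE (c : CantorConstr) (x : ℝ) : Prop :=
  ∀ i : ℕ, 1 ≤ i →
    min (c.r (2 * i) - c.l (2 * i)) (c.r (2 * i + 1) - c.l (2 * i + 1)) ≥
      x * (c.l (2 * i + 1) - c.r (2 * i))

/-- The length of the gap `G_i`. -/
def CantorConstr.gapLen (c : CantorConstr) (i : ℕ) : ℝ := c.l (2 * i + 1) - c.r (2 * i)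

/-- The construction is hole-decreasing. -/
def CantorConstr.holeDecr (c : CantorConstr) : Prop :=
  ∀ i : ℕ, 1 ≤ i → c.gapLen (2 * i) ≤ c.gapLen i ∧ c.gapLen (2 * i + 1) ≤ c.gapLen i


/-- `Anc t m` : `t` is an ancestor of `m` (or equal) in the binary tree on `ℕ≥1`. -/
def Anc (t m : ℕ) : Prop := ∃ k, m / 2 ^ k = t

lemma anc_refl (t : ℕ) : Anc t t := ⟨0, by simp⟩

lemma anc_trans {u t m : ℕ} (h1 : Anc u t) (h2 : Anc t m) : Anc u m := by
  obtain ⟨j, hj⟩ := h1; obtain ⟨k, hk⟩ := h2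
  exact ⟨k + j, by rw [pow_add, ← Nat.div_div_eq_div_mul, hk, hj]⟩

lemma anc_child_left (t : ℕ) : Anc t (2 * t) :=
  ⟨1, by rw [pow_one]; omega⟩

lemma anc_child_right (t : ℕ) : Anc t (2 * t + 1) :=
  ⟨1, by rw [pow_one]; omega⟩

lemma anc_le {t m : ℕ} (h : Anc t m) : t ≤ m := by
  obtain ⟨k, hk⟩ := h; subst hk; exact Nat.div_le_self _ _

lemma anc_one_le {t m : ℕ} (ht : 1 ≤ t) (h : Anc t m) : 1 ≤ m :=
  le_trans ht (anc_le h)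

lemma anc_cases {t m : ℕ} (h : Anc t m) (hne : m ≠ t) :
    Anc (2 * t) m ∨ Anc (2 * t + 1) m := by
  obtain ⟨k, hk⟩ := h
  cases k with
  | zero => simp at hk; omega
  | succ k' =>
    have hv : m / 2 ^ k' / 2 = t := by
      rw [Nat.div_div_eq_div_mul, ← pow_succ]; exact hk
    have : m / 2 ^ k' = 2 * t ∨ m / 2 ^ k' = 2 * t + 1 := by omega
    rcases this with h' | h'
    · exact Or.inl ⟨k', h'⟩
    · exact Or.inr ⟨k', h'⟩

/-- depth in the tree -/
def tdepth (m : ℕ) : ℕ := Nat.log 2 m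

lemma tdepth_one : tdepth 1 = 0 := by simp [tdepth]

lemma tdepth_eq_zero {t : ℕ} (ht : 1 ≤ t) (h : tdepth t = 0) : t = 1 := by
  by_contra hne
  have h2 : 2 ≤ t := by omega
  have := Nat.log_pos (b := 2) (by norm_num) h2
  simp [tdepth] at h; omega

lemma tdepth_double {t : ℕ} (ht : 1 ≤ t) : tdepth (2 * t) = tdepth t + 1 := by
  have h1 : 2 ^ tdepth t ≤ t := Nat.pow_log_le_self 2 (by omega)
  have h2 : t < 2 ^ (tdepth t + 1) := Nat.lt_pow_succ_log_self (by norm_num) t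
  exact Nat.log_eq_of_pow_le_of_lt_pow (by rw [pow_succ]; omega)
    (by rw [pow_succ, pow_succ] at *; omega)

lemma tdepth_double1 {t : ℕ} (ht : 1 ≤ t) : tdepth (2 * t + 1) = tdepth t + 1 := by
  have h1 : 2 ^ tdepth t ≤ t := Nat.pow_log_le_self 2 (by omega)
  have h2 : t < 2 ^ (tdepth t + 1) := Nat.lt_pow_succ_log_self (by norm_num) t
  exact Nat.log_eq_of_pow_le_of_lt_pow (by rw [pow_succ]; omega)
    (by rw [pow_succ, pow_succ] at *; omega)

lemma tdepth_parent {m : ℕ} (hm : 2 ≤ m) : tdepth (m / 2) + 1 = tdepth m := by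
  have h1 : 1 ≤ m / 2 := by omega
  have : m = 2 * (m / 2) ∨ m = 2 * (m / 2) + 1 := by omega
  rcases this with h | h
  · conv_rhs => rw [h]
    rw [tdepth_double h1]
  · conv_rhs => rw [h]
    rw [tdepth_double1 h1]

lemma anc_depth_aux : ∀ k t m : ℕ, 1 ≤ t → m / 2 ^ k = t → tdepth m = tdepth t + k := by
  intro k
  induction k with
  | zero => intro t m _ h; simp at h; simp [h]
  | succ k' ih =>
    intro t m ht h
    have hm2 : t * 2 ^ (k' + 1) ≤ m :=
      (Nat.le_div_iff_mul_le (by positivity)).1 (le_of_eq h.symm)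
    have hm : 2 ≤ m := by
      have : 2 ≤ 2 ^ (k' + 1) := by
        have := Nat.one_lt_two_pow (n := k' + 1) (by omega); omega
      nlinarith
    have h' : m / 2 / 2 ^ k' = t := by
      rw [Nat.div_div_eq_div_mul, mul_comm 2 (2 ^ k'), ← pow_succ]; exact h
    have := ih t (m / 2) ht h'
    have hp := tdepth_parent hm
    omega

lemma anc_depth {t m : ℕ} (ht : 1 ≤ t) (h : Anc t m) : tdepth t ≤ tdepth m := by
  obtain ⟨k, hk⟩ := h; have := anc_depth_aux k t m ht hk; omega

lemma anc_eq_of_depth {t m : ℕ} (ht : 1 ≤ t) (h : Anc t m) (hd : tdepth m = tdepth t) :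
    m = t := by
  obtain ⟨k, hk⟩ := h
  have := anc_depth_aux k t m ht hk
  have hk0 : k = 0 := by omega
  subst hk0; simpa using hk

lemma anc_antisym {t m : ℕ} (ht : 1 ≤ t) (hm : 1 ≤ m) (h1 : Anc t m) (h2 : Anc m t) :
    t = m := by
  have d1 := anc_depth ht h1
  have d2 := anc_depth hm h2
  exact (anc_eq_of_depth ht h1 (by omega)).symm

/-- the ancestor of `v` at depth `tdepth v - k` -/
lemma anc_ancestor_at_depth {u v : ℕ} (hu : 1 ≤ u) (hv : 1 ≤ v)
    (hd : tdepth u ≤ tdepth v) :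
    ∃ v', 1 ≤ v' ∧ Anc v' v ∧ tdepth v' = tdepth u := by
  set k := tdepth v - tdepth u with hk
  refine ⟨v / 2 ^ k, ?_, ⟨k, rfl⟩, ?_⟩
  · have h1 : 2 ^ k ≤ 2 ^ tdepth v := Nat.pow_le_pow_right (by norm_num) (by omega)
    have h2 : 2 ^ tdepth v ≤ v := Nat.pow_log_le_self 2 (by omega)
    exact Nat.one_le_div_iff (by positivity) |>.2 (by omega)
  · have h1 : 1 ≤ v / 2 ^ k := by
      have h1 : 2 ^ k ≤ 2 ^ tdepth v := Nat.pow_le_pow_right (by norm_num) (by omega)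
      have h2 : 2 ^ tdepth v ≤ v := Nat.pow_log_le_self 2 (by omega)
      exact Nat.one_le_div_iff (by positivity) |>.2 (by omega)
    have := anc_depth_aux k (v / 2 ^ k) v h1 rfl
    omega

lemma anc_one {m : ℕ} (hm : 1 ≤ m) : Anc 1 m := by
  refine ⟨tdepth m, ?_⟩
  have h1 : 2 ^ tdepth m ≤ m := Nat.pow_log_le_self 2 (by omega)
  have h2 : m < 2 ^ (tdepth m + 1) := Nat.lt_pow_succ_log_self (by norm_num) m
  rw [pow_succ] at h2
  exact Nat.div_eq_of_lt_le (by omega) (by omega)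

/-- left spine: `l (t * 2^k) = l t` chain -/
lemma anc_pow_mul (t k : ℕ) (ht : 1 ≤ t) : Anc t (t * 2 ^ k) :=
  ⟨k, Nat.mul_div_cancel t (by positivity)⟩

lemma tdepth_pow_mul (t k : ℕ) (ht : 1 ≤ t) : tdepth (t * 2 ^ k) = tdepth t + k :=
  anc_depth_aux k t _ ht (Nat.mul_div_cancel t (by positivity))
namespace CantorConstr

variable (c : CantorConstr)

lemma len_pos {i : ℕ} (hi : 1 ≤ i) : 0 < c.r i - c.l i := sub_pos.2 (c.lt i hi)

lemma gap_pos {i : ℕ} (hi : 1 ≤ i) : 0 < c.gapLen i := sub_pos.2 (c.gap_lt i hi)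

lemma childL_len {x : ℝ} (hd : c.densityGE x) {i : ℕ} (hi : 1 ≤ i) :
    x * c.gapLen i ≤ c.r (2 * i) - c.l (2 * i) :=
  le_trans (hd i hi) (min_le_left _ _)

lemma childR_len {x : ℝ} (hd : c.densityGE x) {i : ℕ} (hi : 1 ≤ i) :
    x * c.gapLen i ≤ c.r (2 * i + 1) - c.l (2 * i + 1) :=
  le_trans (hd i hi) (min_le_right _ _)

lemma len_split {i : ℕ} (hi : 1 ≤ i) :
    c.r i - c.l i =
      (c.r (2 * i) - c.l (2 * i)) + c.gapLen i + (c.r (2 * i + 1) - c.l (2 * i + 1)) := by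
  have h1 := c.left_eq i hi
  have h2 := c.right_eq i hi
  unfold gapLen; linarith

lemma gap_le_len {x : ℝ} (hx : 0 < x) (hd : c.densityGE x) {i : ℕ} (hi : 1 ≤ i) :
    (2 * x + 1) * c.gapLen i ≤ c.r i - c.l i := by
  have h1 := c.childL_len hd hi
  have h2 := c.childR_len hd hi
  have h3 := c.len_split hi
  linarith

/-- basic child inclusion bounds -/
lemma child_bounds {i : ℕ} (hi : 1 ≤ i) :
    c.l i ≤ c.l (2 * i) ∧ c.r (2 * i) ≤ c.r i ∧
    c.l i ≤ c.l (2 * i + 1) ∧ c.r (2 * i + 1) ≤ c.r i := by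
  have h1 := c.left_eq i hi
  have h2 := c.right_eq i hi
  have h3 := c.gap_lt i hi
  have h4 := c.lt (2 * i) (by omega)
  have h5 := c.lt (2 * i + 1) (by omega)
  refine ⟨le_of_eq h1.symm, ?_, ?_, le_of_eq h2⟩ <;> linarith

lemma parent_sub {m : ℕ} (hm : 2 ≤ m) :
    c.l (m / 2) ≤ c.l m ∧ c.r m ≤ c.r (m / 2) := by
  set i := m / 2 with hi
  have h1 : 1 ≤ i := by omega
  have hb := c.child_bounds h1
  have : m = 2 * i ∨ m = 2 * i + 1 := by omega
  rcases this with h | h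
  · rw [h]; exact ⟨hb.1, hb.2.1⟩
  · rw [h]; exact ⟨hb.2.2.1, hb.2.2.2⟩

lemma anc_sub_aux : ∀ k t m : ℕ, 1 ≤ t → m / 2 ^ k = t → c.l t ≤ c.l m ∧ c.r m ≤ c.r t := by
  intro k
  induction k with
  | zero => intro t m _ h; simp at h; simp [h]
  | succ k' ih =>
    intro t m ht h
    have hm2 : t * 2 ^ (k' + 1) ≤ m :=
      (Nat.le_div_iff_mul_le (by positivity)).1 (le_of_eq h.symm)
    have hm : 2 ≤ m := by
      have : 2 ≤ 2 ^ (k' + 1) := by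
        have := Nat.one_lt_two_pow (n := k' + 1) (by omega); omega
      nlinarith
    have h' : m / 2 / 2 ^ k' = t := by
      rw [Nat.div_div_eq_div_mul, mul_comm 2 (2 ^ k'), ← pow_succ]; exact h
    have hih := ih t (m / 2) ht h'
    have hp := c.parent_sub hm
    exact ⟨le_trans hih.1 hp.1, le_trans hp.2 hih.2⟩

lemma anc_sub {t m : ℕ} (ht : 1 ≤ t) (h : Anc t m) :
    c.l t ≤ c.l m ∧ c.r m ≤ c.r t := by
  obtain ⟨k, hk⟩ := h; exact c.anc_sub_aux k t m ht hk

/-- Distinct nodes of the same depth have separated intervals. -/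
lemma disj_same_depth : ∀ d u v : ℕ, 1 ≤ u → 1 ≤ v → tdepth u = d → tdepth v = d →
    u ≠ v → c.r u < c.l v ∨ c.r v < c.l u := by
  intro d
  induction d with
  | zero =>
    intro u v hu hv hdu hdv hne
    exact absurd (by rw [tdepth_eq_zero hu hdu, tdepth_eq_zero hv hdv]) hne
  | succ d ih =>
    intro u v hu hv hdu hdv hne
    have hu2 : 2 ≤ u := by
      by_contra h
      have : u = 1 := by omega
      rw [this, tdepth_one] at hdu; omega
    have hv2 : 2 ≤ v := by
      by_contra h
      have : v = 1 := by omega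
      rw [this, tdepth_one] at hdv; omega
    have hpu : tdepth (u / 2) = d := by have := tdepth_parent hu2; omega
    have hpv : tdepth (v / 2) = d := by have := tdepth_parent hv2; omega
    by_cases hpe : u / 2 = v / 2
    · -- siblings
      set i := u / 2 with hi
      have hi1 : 1 ≤ i := by omega
      have hgap := c.gap_lt i hi1
      have hbu : u = 2 * i ∨ u = 2 * i + 1 := by omega
      have hbv : v = 2 * i ∨ v = 2 * i + 1 := by omega
      rcases hbu with h1 | h1 <;> rcases hbv with h2 | h2 <;>
        first
        | (exfalso; omega)
        | (left; rw [h1, h2]; linarith)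
        | (right; rw [h1, h2]; linarith)
    · have := ih (u / 2) (v / 2) (by omega) (by omega) hpu hpv hpe
      have hsu := c.parent_sub hu2
      have hsv := c.parent_sub hv2
      rcases this with h | h
      · left; linarith
      · right; linarith

/-- Incomparable nodes have separated intervals. -/
lemma disj_incomp {u v : ℕ} (hu : 1 ≤ u) (hv : 1 ≤ v) (h1 : ¬ Anc u v) (h2 : ¬ Anc v u) :
    c.r u < c.l v ∨ c.r v < c.l u := by
  rcases le_total (tdepth u) (tdepth v) with hd | hd
  · obtain ⟨v', hv', hanc, hdep⟩ := anc_ancestor_at_depth hu hv hd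
    have hne : v' ≠ u := fun h => h1 (h ▸ hanc)
    have hsub := c.anc_sub hv' hanc
    rcases c.disj_same_depth (tdepth u) v' u hv' hu hdep rfl hne with h | h
    · right; linarith
    · left; linarith
  · obtain ⟨u', hu', hanc, hdep⟩ := anc_ancestor_at_depth hv hu hd
    have hne : u' ≠ v := fun h => h2 (h ▸ hanc)
    have hsub := c.anc_sub hu' hanc
    rcases c.disj_same_depth (tdepth v) u' v hu' hv hdep rfl hne with h | h
    · left; linarith
    · right; linarith

/-- A gap is inside the (open) node interval. -/
lemma gap_in_node {m : ℕ} (hm : 1 ≤ m) {z : ℝ}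
    (hz : z ∈ Set.Ioo (c.r (2 * m)) (c.l (2 * m + 1))) :
    c.l m < z ∧ z < c.r m := by
  have hb := c.child_bounds hm
  have h4 := c.lt (2 * m) (by omega)
  have h5 := c.lt (2 * m + 1) (by omega)
  obtain ⟨hz1, hz2⟩ := hz
  constructor <;> linarith

/-- key: a point of a node deeper than `m` is not in the gap of `m` -/
lemma deep_node_avoids_gap {u m : ℕ} (hu : 1 ≤ u) (hm : 1 ≤ m)
    (hdep : tdepth m < tdepth u) {z : ℝ} (hzu : c.l u ≤ z ∧ z ≤ c.r u) :
    z ∉ Set.Ioo (c.r (2 * m)) (c.l (2 * m + 1)) := by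
  intro hz
  by_cases hA : Anc m u
  · have hne : u ≠ m := by intro h; rw [h] at hdep; omega
    have hb := c.child_bounds hm
    rcases anc_cases hA hne with h | h
    · have hs := c.anc_sub (t := 2 * m) (by omega) h
      linarith [hz.1, hzu.2, hs.2]
    · have hs := c.anc_sub (t := 2 * m + 1) (by omega) h
      linarith [hz.2, hzu.1, hs.1]
  · have hA2 : ¬ Anc u m := by
      intro h
      have := anc_depth hu h; omega
    have hgap := c.gap_in_node hm hz
    rcases c.disj_incomp hm hu hA hA2 with h | h
    · linarith [hzu.1, hgap.2]
    · linarith [hzu.2, hgap.1]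

lemma lspine_l (t : ℕ) (ht : 1 ≤ t) : ∀ k, c.l (t * 2 ^ k) = c.l t := by
  intro k
  induction k with
  | zero => simp
  | succ k ih =>
    have h1 : 1 ≤ t * 2 ^ k := by
      have : 0 < t * 2 ^ k := by positivity
      omega
    have : t * 2 ^ (k + 1) = 2 * (t * 2 ^ k) := by ring
    rw [this, c.left_eq _ h1, ih]

/-- right spine index -/
def rsp (t : ℕ) : ℕ → ℕ
  | 0 => t
  | k + 1 => 2 * rsp t k + 1

lemma rsp_pos (t : ℕ) (ht : 1 ≤ t) : ∀ k, 1 ≤ rsp t k := by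
  intro k; induction k with
  | zero => exact ht
  | succ k ih => unfold rsp; omega

lemma rsp_r (t : ℕ) (ht : 1 ≤ t) : ∀ k, c.r (rsp t k) = c.r t := by
  intro k; induction k with
  | zero => rfl
  | succ k ih => rw [rsp, c.right_eq _ (rsp_pos t ht k), ih]

lemma rsp_anc (t : ℕ) (ht : 1 ≤ t) : ∀ k, Anc t (rsp t k) := by
  intro k; induction k with
  | zero => exact anc_refl t
  | succ k ih => exact anc_trans ih (anc_child_right _)

lemma rsp_depth (t : ℕ) (ht : 1 ≤ t) : ∀ k, tdepth (rsp t k) = tdepth t + k := by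
  intro k; induction k with
  | zero => rfl
  | succ k ih => rw [rsp, tdepth_double1 (rsp_pos t ht k), ih]; omega

lemma l_mem_cantorSet {t : ℕ} (ht : 1 ≤ t) : c.l t ∈ c.cantorSet := by
  constructor
  · have hs := c.anc_sub (t := 1) le_rfl (anc_one ht)
    exact ⟨hs.1, le_trans (le_of_lt (c.lt t ht)) hs.2⟩
  · intro hmem
    simp only [Set.mem_iUnion] at hmem
    obtain ⟨m, hm, hz⟩ := hmem
    set k := tdepth m + 1
    set u := t * 2 ^ k with hu
    have hu1 : 1 ≤ u := by
      have : 0 < t * 2 ^ k := by positivity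
      omega
    have hlu : c.l u = c.l t := c.lspine_l t ht k
    have hdep : tdepth m < tdepth u := by
      rw [hu, tdepth_pow_mul t k ht]; omega
    refine c.deep_node_avoids_gap hu1 hm hdep ⟨le_of_eq hlu, ?_⟩ hz
    rw [← hlu]; exact (c.lt u hu1).le

lemma r_mem_cantorSet {t : ℕ} (ht : 1 ≤ t) : c.r t ∈ c.cantorSet := by
  constructor
  · have hs := c.anc_sub (t := 1) le_rfl (anc_one ht)
    exact ⟨le_trans hs.1 (le_of_lt (c.lt t ht)), hs.2⟩
  · intro hmem
    simp only [Set.mem_iUnion] at hmem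
    obtain ⟨m, hm, hz⟩ := hmem
    set k := tdepth m + 1
    set u := rsp t k with hu
    have hu1 : 1 ≤ u := rsp_pos t ht k
    have hru : c.r u = c.r t := c.rsp_r t ht k
    have hdep : tdepth m < tdepth u := by
      rw [hu, rsp_depth t ht k]; omega
    exact c.deep_node_avoids_gap hu1 hm hdep
      ⟨by rw [← hru]; exact le_of_lt (c.lt u hu1), le_of_eq hru.symm⟩ hz

end CantorConstr
namespace CantorConstr

variable (c : CantorConstr)

/-- Gaps at distinct nodes are ordered (disjoint). -/
lemma gaps_ord {m m' : ℕ} (hm : 1 ≤ m) (hm' : 1 ≤ m') (hne : m ≠ m') :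
    c.l (2 * m + 1) ≤ c.r (2 * m') ∨ c.l (2 * m' + 1) ≤ c.r (2 * m) := by
  have hbm := c.child_bounds hm
  have hbm' := c.child_bounds hm'
  have hl2m' := c.lt (2 * m') (by omega)
  have hl2m := c.lt (2 * m) (by omega)
  have hl2m'1 := c.lt (2 * m' + 1) (by omega)
  have hl2m1 := c.lt (2 * m + 1) (by omega)
  by_cases hA : Anc m m'
  · rcases anc_cases hA (Ne.symm hne) with h | h
    · -- m' below left child of m : gap m' ⊆ I (2m), so gap m' is left of gap m
      have hs := c.anc_sub (t := 2 * m) (by omega) h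
      right; linarith [hs.2]
    · have hs := c.anc_sub (t := 2 * m + 1) (by omega) h
      left; linarith [hs.1]
  · by_cases hA' : Anc m' m
    · rcases anc_cases hA' hne with h | h
      · have hs := c.anc_sub (t := 2 * m') (by omega) h
        left; linarith [hs.2]
      · have hs := c.anc_sub (t := 2 * m' + 1) (by omega) h
        right; linarith [hs.1]
    · rcases c.disj_incomp hm hm' hA hA' with h | h
      · left; linarith
      · right; linarith

/-- There are only finitely many gaps of size `> δ`. -/
lemma bigSet_finite {δ : ℝ} (hδ : 0 < δ) : {m : ℕ | 1 ≤ m ∧ δ < c.gapLen m}.Finite := by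
  set S := {m : ℕ | 1 ≤ m ∧ δ < c.gapLen m} with hS
  set mid := fun m : ℕ => (c.r (2 * m) + c.l (2 * m + 1)) / 2 with hmid
  set φ := fun m : ℕ => ⌊(mid m - c.l 1) / δ⌋₊ with hφ
  have hmem : ∀ m ∈ S, c.l 1 < mid m ∧ mid m < c.r 1 := by
    intro m hm
    obtain ⟨hm1, hmbig⟩ := hm
    have hg := c.gap_pos hm1
    have hmm : mid m ∈ Set.Ioo (c.r (2 * m)) (c.l (2 * m + 1)) := by
      unfold gapLen at hg
      constructor
      · simp only [hmid]; linarith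
      · simp only [hmid]; linarith
    have := c.gap_in_node hm1 hmm
    have hsub := c.anc_sub (t := 1) le_rfl (anc_one hm1)
    exact ⟨by linarith [this.1, hsub.1], by linarith [this.2, hsub.2]⟩
  have hnonneg : ∀ m ∈ S, 0 ≤ (mid m - c.l 1) / δ := by
    intro m hm
    have := (hmem m hm).1
    exact div_nonneg (by linarith) hδ.le
  -- injective on S
  have hinj : Set.InjOn φ S := by
    intro m hm m' hm' heq
    by_contra hne
    have h1 := hm.2; have h2 := hm'.2
    have hsep : δ < |mid m - mid m'| := by
      rcases c.gaps_ord hm.1 hm'.1 hne with h | h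
      · have : mid m' - mid m > δ := by
          simp only [hmid]
          unfold gapLen at h1 h2
          linarith
        rw [abs_sub_comm, abs_of_pos (by linarith)]; linarith
      · have : mid m - mid m' > δ := by
          simp only [hmid]
          unfold gapLen at h1 h2
          linarith
        rw [abs_of_pos (by linarith)]; linarith
    have hb1 := Nat.floor_eq_iff (hnonneg m hm) |>.1 rfl
    have hb2 := Nat.floor_eq_iff (hnonneg m' hm') |>.1 rfl
    have heqr : ((φ m : ℕ) : ℝ) = ((φ m' : ℕ) : ℝ) := by rw [heq]
    have : |mid m - mid m'| < δ := by
      rw [abs_lt]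
      have d1 := hb1.1; have d2 := hb1.2; have d3 := hb2.1; have d4 := hb2.2
      rw [div_lt_iff₀ hδ] at d2 d4
      rw [le_div_iff₀ hδ] at d1 d3
      constructor <;> nlinarith [heqr]
    linarith
  -- image is bounded
  have himg : φ '' S ⊆ Set.Icc 0 ⌊(c.r 1 - c.l 1) / δ⌋₊ := by
    rintro k ⟨m, hm, rfl⟩
    refine ⟨Nat.zero_le _, Nat.floor_le_floor ?_⟩
    have h := hmem m hm
    gcongr
    linarith [h.1, h.2]
  exact Set.Finite.of_finite_image ((Set.finite_Icc _ _).subset himg) hinj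

lemma bb_exists {δ : ℝ} (hδ : 0 < δ) (t : ℕ) (ht : 1 ≤ t) :
    ∃ D, ∀ m, Anc t m → δ < c.gapLen m → tdepth m < tdepth t + D := by
  have hfin := (c.bigSet_finite hδ).image tdepth
  obtain ⟨D₀, hD₀⟩ := hfin.bddAbove
  refine ⟨D₀ + 1, fun m hanc hbig => ?_⟩
  have hm1 : 1 ≤ m := anc_one_le ht hanc
  have : tdepth m ≤ D₀ := hD₀ ⟨m, ⟨hm1, hbig⟩, rfl⟩
  omega

open Classical in
/-- `BB c δ t` : depth bound for gaps of size `> δ` in the subtree of `t`. -/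
noncomputable def BB (δ : ℝ) (t : ℕ) : ℕ :=
  if h : 0 < δ ∧ 1 ≤ t then Nat.find (c.bb_exists h.1 t h.2) else 0

open Classical in
lemma BB_spec {δ : ℝ} (hδ : 0 < δ) {t : ℕ} (ht : 1 ≤ t) :
    ∀ m, Anc t m → δ < c.gapLen m → tdepth m < tdepth t + c.BB δ t := by
  unfold BB
  rw [dif_pos ⟨hδ, ht⟩]
  exact Nat.find_spec (c.bb_exists hδ t ht)

open Classical in
lemma BB_le {δ : ℝ} (hδ : 0 < δ) {t : ℕ} (ht : 1 ≤ t) {D : ℕ}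
    (hD : ∀ m, Anc t m → δ < c.gapLen m → tdepth m < tdepth t + D) : c.BB δ t ≤ D := by
  unfold BB
  rw [dif_pos ⟨hδ, ht⟩]
  exact Nat.find_le hD

lemma BB_pos {δ : ℝ} (hδ : 0 < δ) {t : ℕ} (ht : 1 ≤ t) {m : ℕ}
    (h1 : Anc t m) (h2 : δ < c.gapLen m) : 1 ≤ c.BB δ t := by
  by_contra h
  have hz : c.BB δ t = 0 := by omega
  have := c.BB_spec hδ ht m h1 h2
  rw [hz] at this
  have := anc_depth ht h1
  omega

lemma BB_child {δ : ℝ} (hδ : 0 < δ) {t : ℕ} (ht : 1 ≤ t) (hB : 1 ≤ c.BB δ t)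
    {u : ℕ} (hu : u = 2 * t ∨ u = 2 * t + 1) : c.BB δ u ≤ c.BB δ t - 1 := by
  have hu1 : 1 ≤ u := by omega
  have hdu : tdepth u = tdepth t + 1 := by
    rcases hu with h | h
    · rw [h]; exact tdepth_double ht
    · rw [h]; exact tdepth_double1 ht
  apply c.BB_le hδ hu1
  intro m hanc hbig
  have hanc' : Anc t m := by
    rcases hu with h | h
    · exact anc_trans (h ▸ anc_child_left t) hanc
    · exact anc_trans (h ▸ anc_child_right t) hanc
  have := c.BB_spec hδ ht m hanc' hbig
  omega

lemma BB_zero {δ : ℝ} (hδ : 0 < δ) {t : ℕ} (ht : 1 ≤ t) (h : c.BB δ t = 0) :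
    ∀ m, Anc t m → ¬ (δ < c.gapLen m) := by
  intro m hanc hbig
  have := c.BB_pos hδ ht hanc hbig
  omega

/-- lifting gap-avoidance from a child to its parent -/
lemma avoid_lift {δ : ℝ} {t u : ℕ} (ht : 1 ≤ t) (hu : u = 2 * t ∨ u = 2 * t + 1) {z : ℝ}
    (hz1 : c.l u ≤ z) (hz2 : z ≤ c.r u)
    (h : ∀ m, 1 ≤ m → Anc u m → δ < c.gapLen m → z ∉ Set.Ioo (c.r (2 * m)) (c.l (2 * m + 1))) :
    ∀ m, 1 ≤ m → Anc t m → δ < c.gapLen m → z ∉ Set.Ioo (c.r (2 * m)) (c.l (2 * m + 1)) := by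
  intro m hm hanc hbig hmem
  have hb := c.child_bounds ht
  by_cases hmt : m = t
  · subst hmt
    rcases hu with h' | h'
    · subst h'; exact absurd hmem.1 (by linarith [hz2])
    · subst h'; exact absurd hmem.2 (by linarith [hz1])
  · rcases anc_cases hanc hmt with h' | h'
    · rcases hu with h'' | h''
      · exact h m hm (h'' ▸ h') hbig hmem
      · -- z in right child, m under left child
        have hs := c.anc_sub (t := 2 * t) (by omega) h'
        have hgap := c.gap_in_node hm hmem
        have hglt := c.gap_lt t ht
        rw [h''] at hz1
        linarith [hgap.1, hs.2]
    · rcases hu with h'' | h''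
      · have hs := c.anc_sub (t := 2 * t + 1) (by omega) h'
        have hgap := c.gap_in_node hm hmem
        have hglt := c.gap_lt t ht
        rw [h''] at hz2
        linarith [hgap.2, hs.1]
      · exact h m hm (h'' ▸ h') hbig hmem

/-- a point avoiding all big gaps is `δ`-close to the Cantor set -/
lemma close_to_cantor {δ : ℝ} (hδ : 0 < δ) {z : ℝ} (hz : z ∈ Set.Icc (c.l 1) (c.r 1))
    (h : ∀ m, 1 ≤ m → δ < c.gapLen m → z ∉ Set.Ioo (c.r (2 * m)) (c.l (2 * m + 1))) :
    ∃ y ∈ c.cantorSet, |z - y| ≤ δ := by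
  by_cases hg : ∃ m, 1 ≤ m ∧ z ∈ Set.Ioo (c.r (2 * m)) (c.l (2 * m + 1))
  · obtain ⟨m, hm1, hmem⟩ := hg
    have hsize : c.gapLen m ≤ δ := by
      by_contra hc
      exact h m hm1 (lt_of_not_ge hc) hmem
    refine ⟨c.r (2 * m), c.r_mem_cantorSet (by omega), ?_⟩
    have h1 := hmem.1
    have h2 := hmem.2
    rw [abs_of_pos (by linarith)]
    unfold gapLen at hsize
    linarith
  · push_neg at hg
    refine ⟨z, ⟨hz, ?_⟩, by simp [abs_nonneg, le_of_lt hδ]⟩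
    intro hmem
    simp only [Set.mem_iUnion] at hmem
    obtain ⟨m, hm, hzm⟩ := hmem
    exact hg m hm hzm

end CantorConstr

/-- proportional filling of a box -/
lemma exists_sum_mem_Icc {n : ℕ} (p q : Fin n → ℝ) (hpq : ∀ j, p j ≤ q j) (s : ℝ)
    (h1 : ∑ j, p j ≤ s) (h2 : s ≤ ∑ j, q j) :
    ∃ f : Fin n → ℝ, s = ∑ j, f j ∧ ∀ j, f j ∈ Set.Icc (p j) (q j) := by
  set T := ∑ j, (q j - p j) with hT
  have hTeq : T = ∑ j, q j - ∑ j, p j := by rw [hT, Finset.sum_sub_distrib]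
  have hT0 : 0 ≤ T := by rw [hTeq]; linarith
  by_cases hTz : T = 0
  · refine ⟨p, by linarith, fun j => ⟨le_refl _, hpq j⟩⟩
  · have hTpos : 0 < T := lt_of_le_of_ne hT0 (Ne.symm hTz)
    set θ := (s - ∑ j, p j) / T with hθ
    have hθ0 : 0 ≤ θ := by apply div_nonneg (by linarith) (le_of_lt hTpos)
    have hθ1 : θ ≤ 1 := by
      rw [hθ, div_le_one hTpos]; linarith [hTeq]
    refine ⟨fun j => p j + θ * (q j - p j), ?_, fun j => ?_⟩
    · rw [Finset.sum_add_distrib, ← Finset.mul_sum, ← hT, hθ]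
      field_simp
      ring
    · constructor
      · have : 0 ≤ θ * (q j - p j) := mul_nonneg hθ0 (by linarith [hpq j])
        simp; linarith
      · have : θ * (q j - p j) ≤ q j - p j := by nlinarith [hpq j]
        simp; linarith
section Helpers

lemma sum_update_real {n : ℕ} (g : (Fin n) → ℕ → ℝ) (t : Fin n → ℕ) (K : Fin n) (u : ℕ) :
    ∑ j, g j (Function.update t K u j) = (∑ j, g j (t j)) - g K (t K) + g K u := by
  have h1 : ∑ j ∈ Finset.univ.erase K, g j (Function.update t K u j)
      = ∑ j ∈ Finset.univ.erase K, g j (t j) := by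
    apply Finset.sum_congr rfl
    intro j hj
    rw [Function.update_of_ne (Finset.mem_erase.1 hj).1]
  have h2 := Finset.sum_erase_add Finset.univ (fun j => g j (Function.update t K u j))
    (Finset.mem_univ K)
  have h3 := Finset.sum_erase_add Finset.univ (fun j => g j (t j)) (Finset.mem_univ K)
  simp only [Function.update_self] at h2
  rw [h1] at h2
  linarith

lemma sum_update_nat {n : ℕ} (g : (Fin n) → ℕ → ℕ) (t : Fin n → ℕ) (K : Fin n) (u : ℕ) :
    (∑ j, g j (Function.update t K u j)) + g K (t K) = (∑ j, g j (t j)) + g K u := by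
  have h1 : ∑ j ∈ Finset.univ.erase K, g j (Function.update t K u j)
      = ∑ j ∈ Finset.univ.erase K, g j (t j) := by
    apply Finset.sum_congr rfl
    intro j hj
    rw [Function.update_of_ne (Finset.mem_erase.1 hj).1]
  have h2 := Finset.sum_erase_add Finset.univ (fun j => g j (Function.update t K u j))
    (Finset.mem_univ K)
  have h3 := Finset.sum_erase_add Finset.univ (fun j => g j (t j)) (Finset.mem_univ K)
  simp only [Function.update_self] at h2
  rw [h1] at h2
  omega

/-- forced-child length bound : if `σ < LL + G` and `x*G ≤ LL` then `x/(x+1) * σ ≤ LL` -/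
lemma forced_child_bound {x σ LL G : ℝ} (hx : 0 < x) (hσ : 0 ≤ σ)
    (hLL : x * G ≤ LL) (hforced : σ < LL + G) : x / (x + 1) * σ ≤ LL := by
  rw [div_mul_eq_mul_div, div_le_iff₀ (by linarith)]
  rcases le_or_gt σ LL with h | h
  · nlinarith
  · nlinarith


lemma stuck_contra_side {xJ σ S' LL G : ℝ} (hx : 0 < xJ) (hcov : σ ≤ (xJ + 1) * S')
    (he1 : σ > S' + LL) (hLLx : xJ * G ≤ LL) (hS' : S' < G) : False := by nlinarith

lemma stuck_contra_cc {xJ QP S' G : ℝ} (h2 : 0 < 2 * xJ + 1) (h1 : 0 < xJ + 1)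
    (hcov : (xJ + 1) * QP ≤ (xJ + 1) * S' * (2 * xJ + 1))
    (hgl : (2 * xJ + 1) * G ≤ QP) (hS' : S' < G) : False := by
  have h3 : (xJ + 1) * QP ≤ (xJ + 1) * (S' * (2 * xJ + 1)) := by nlinarith
  have h4 := le_of_mul_le_mul_left h3 h1
  nlinarith

lemma bigger_child_bound {xJ QP LL G other : ℝ} (hx2 : 0 < 2 * xJ + 1)
    (hgl : (2 * xJ + 1) * G ≤ QP) (hsplit : QP = LL + G + other) (hbig : other ≤ LL) :
    xJ * QP ≤ LL * (2 * xJ + 1) := by nlinarith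

end Helpers
set_option maxHeartbeats 1000000 in
lemma core_lemma {n : ℕ} (c : Fin n → CantorConstr) (x : Fin n → ℝ)
    (hx : ∀ j, 0 < x j) (hd : ∀ j, (c j).densityGE (x j))
    (h1 : 1 ≤ ∑ j, x j / (x j + 1)) {δ : ℝ} (hδ : 0 < δ) :
    ∀ μ : ℕ, ∀ t : Fin n → ℕ, ∀ s : ℝ,
    (∀ j, 1 ≤ t j) →
    (∑ j, (c j).BB δ (t j)) ≤ μ →
    (∑ j, (c j).l (t j)) ≤ s →
    s ≤ ∑ j, (c j).r (t j) →
    (∀ j k, 1 ≤ (c k).BB δ (t k) →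
      x j / (x j + 1) * min (s - ∑ i, (c i).l (t i))
          (min ((∑ i, (c i).r (t i)) - s)
            ((x k + 1) / (2 * x k + 1) * ((c k).r (t k) - (c k).l (t k))))
        ≤ (c j).r (t j) - (c j).l (t j)) →
    ∃ f : Fin n → ℝ, s = ∑ j, f j ∧ ∀ j,
      ((c j).l (t j) ≤ f j ∧ f j ≤ (c j).r (t j)) ∧
      ∀ m, 1 ≤ m → Anc (t j) m → δ < (c j).gapLen m →
        f j ∉ Set.Ioo ((c j).r (2 * m)) ((c j).l (2 * m + 1)) := by
  have hbase : ∀ (t : Fin n → ℕ) (s : ℝ), (∀ j, 1 ≤ t j) →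
      (∀ j, (c j).BB δ (t j) = 0) →
      (∑ j, (c j).l (t j)) ≤ s → s ≤ ∑ j, (c j).r (t j) →
      ∃ f : Fin n → ℝ, s = ∑ j, f j ∧ ∀ j,
        ((c j).l (t j) ≤ f j ∧ f j ≤ (c j).r (t j)) ∧
        ∀ m, 1 ≤ m → Anc (t j) m → δ < (c j).gapLen m →
          f j ∉ Set.Ioo ((c j).r (2 * m)) ((c j).l (2 * m + 1)) := by
    intro t s ht hall hsl hsr
    obtain ⟨f, hf1, hf2⟩ := exists_sum_mem_Icc (fun j => (c j).l (t j)) (fun j => (c j).r (t j))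
      (fun j => ((c j).lt (t j) (ht j)).le) s hsl hsr
    refine ⟨f, hf1, fun j => ⟨Set.mem_Icc.1 (hf2 j), ?_⟩⟩
    intro m hm hanc hbig
    exact absurd hbig ((c j).BB_zero hδ (ht j) (hall j) m hanc)
  intro μ
  induction μ with
  | zero =>
    intro t s ht hμ hsl hsr _
    refine hbase t s ht (fun j => ?_) hsl hsr
    have : (c j).BB δ (t j) ≤ ∑ j', (c j').BB δ (t j') :=
      Finset.single_le_sum (f := fun j' => (c j').BB δ (t j'))
        (fun j' _ => Nat.zero_le _) (Finset.mem_univ j)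
    omega
  | succ μ ih =>
    intro t s ht hμ hsl hsr hUF
    by_cases hall : ∀ j, (c j).BB δ (t j) = 0
    · exact hbase t s ht hall hsl hsr
    push_neg at hall
    obtain ⟨K₀, hK₀⟩ := hall
    classical
    set BIGS := Finset.univ.filter (fun j => 1 ≤ (c j).BB δ (t j)) with hBIGS
    have hBne : BIGS.Nonempty := ⟨K₀, by simp [hBIGS]; omega⟩
    obtain ⟨J, hJmem, hJmax⟩ := BIGS.exists_max_image
      (fun j => (x j + 1) / (2 * x j + 1) * ((c j).r (t j) - (c j).l (t j))) hBne
    have hJbig : 1 ≤ (c J).BB δ (t J) := by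
      have h := hJmem; rw [hBIGS, Finset.mem_filter] at h; exact h.2
    have hi1 : 1 ≤ t J := ht J
    have hxJ := hx J
    have hxJ1 : (0:ℝ) < x J + 1 := by linarith
    have hxJ2 : (0:ℝ) < 2 * x J + 1 := by linarith
    -- raw node facts
    have hLLx := (c J).childL_len (hd J) hi1
    have hLRx := (c J).childR_len (hd J) hi1
    have hsplit := (c J).len_split hi1
    have hG := (c J).gap_pos hi1
    have hgl := (c J).gap_le_len (hx J) (hd J) hi1
    have hlen := (c J).len_pos hi1
    have hcb := (c J).child_bounds hi1
    have hle2 := (c J).left_eq (t J) hi1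
    have hre2 := (c J).right_eq (t J) hi1
    have hgap_raw : (c J).gapLen (t J) = (c J).l (2 * t J + 1) - (c J).r (2 * t J) := rfl
    have hsuml2 := sum_update_real (fun j v => (c j).l v) t J (2 * t J)
    have hsumr2 := sum_update_real (fun j v => (c j).r v) t J (2 * t J)
    have hsuml3 := sum_update_real (fun j v => (c j).l v) t J (2 * t J + 1)
    have hsumr3 := sum_update_real (fun j v => (c j).r v) t J (2 * t J + 1)
    have herase3 := Finset.sum_erase_add Finset.univ
      (fun j => (c j).r (t j) - (c j).l (t j)) (Finset.mem_univ J)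
    -- abbreviations
    set SL := ∑ j, (c j).l (t j) with hSL
    set SR := ∑ j, (c j).r (t j) with hSR
    set P := (c J).l (t J) with hP
    set Q := (c J).r (t J) with hQ
    set LL := (c J).r (2 * t J) - (c J).l (2 * t J) with hLL
    set LR := (c J).r (2 * t J + 1) - (c J).l (2 * t J + 1) with hLR
    set G := (c J).gapLen (t J) with hGdef
    have hσ : 0 ≤ s - SL := by linarith
    have hρ : 0 ≤ SR - s := by linarith
    have hsum_len : ∑ j, ((c j).r (t j) - (c j).l (t j)) = SR - SL := by
      rw [hSL, hSR, Finset.sum_sub_distrib]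
    have herase : ∑ j ∈ Finset.univ.erase J, ((c j).r (t j) - (c j).l (t j))
        = (SR - SL) - (Q - P) := by
      rw [hsum_len] at herase3
      linarith
    set sstar := min (s - SL) (min (SR - s) ((x J + 1) / (2 * x J + 1) * (Q - P))) with hss
    have hA : ∀ j, x j / (x j + 1) * sstar ≤ (c j).r (t j) - (c j).l (t j) :=
      fun j => hUF j J hJbig
    have hccpos : (0:ℝ) < (x J + 1) / (2 * x J + 1) := div_pos hxJ1 hxJ2
    have hsstar0 : 0 ≤ sstar :=
      le_min hσ (le_min hρ (mul_nonneg hccpos.le hlen.le))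
    -- coverage
    have hcov : sstar ≤ (x J + 1) * ((SR - SL) - (Q - P)) := by
      have hsum1 : ∑ j ∈ Finset.univ.erase J, (x j / (x j + 1)) * sstar
          ≤ ∑ j ∈ Finset.univ.erase J, ((c j).r (t j) - (c j).l (t j)) :=
        Finset.sum_le_sum (fun j _ => hA j)
      rw [← Finset.sum_mul] at hsum1
      have herasea := Finset.sum_erase_add Finset.univ
        (fun j => x j / (x j + 1)) (Finset.mem_univ J)
      have hasum : 1 - x J / (x J + 1) ≤ ∑ j ∈ Finset.univ.erase J, x j / (x j + 1) := by
        linarith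
      have h1a : (1 - x J / (x J + 1)) * sstar
          ≤ (∑ j ∈ Finset.univ.erase J, x j / (x j + 1)) * sstar :=
        mul_le_mul_of_nonneg_right hasum hsstar0
      have hone : 1 - x J / (x J + 1) = 1 / (x J + 1) := by field_simp; ring
      have hfin : 1 / (x J + 1) * sstar ≤ (SR - SL) - (Q - P) := by
        rw [← hone]; linarith [herase]
      calc sstar = (x J + 1) * (1 / (x J + 1) * sstar) := by field_simp
        _ ≤ (x J + 1) * ((SR - SL) - (Q - P)) :=
            mul_le_mul_of_nonneg_left hfin hxJ1.le
    have hQPsplit : Q - P = LL + G + LR := hsplit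
    -- no-stuck
    have hstuck : (G + LR ≤ SR - s) ∨ (LL + G ≤ s - SL) := by
      by_contra hcon
      push_neg at hcon
      obtain ⟨hc1, hc2⟩ := hcon
      have hS' : (SR - SL) - (Q - P) < G := by linarith
      rcases min_choice (s - SL) (min (SR - s) ((x J + 1) / (2 * x J + 1) * (Q - P))) with h | h
      · rw [← hss] at h
        rw [h] at hcov
        exact stuck_contra_side hxJ hcov (by linarith) hLLx hS'
      · rw [← hss] at h
        rcases min_choice (SR - s) ((x J + 1) / (2 * x J + 1) * (Q - P)) with h2 | h2
        · rw [h2] at h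
          rw [h] at hcov
          exact stuck_contra_side hxJ hcov (by linarith) hLRx hS'
        · rw [h2] at h
          rw [h] at hcov
          rw [div_mul_eq_mul_div, div_le_iff₀ hxJ2] at hcov
          exact stuck_contra_cc hxJ2 hxJ1 (by linarith) hgl hS'
    -- sums for the two children
    have hSL_L : ∑ j, (c j).l (Function.update t J (2 * t J) j) = SL := by
      rw [hsuml2, hle2]; ring_nf
    have hSR_L : ∑ j, (c j).r (Function.update t J (2 * t J) j) = SR - (G + LR) := by
      rw [hsumr2]
      have h2 : (c J).r (2 * t J) = Q - (G + LR) := by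
        rw [hgap_raw, hLR]
        have := hre2
        linarith
      rw [h2]; ring
    have hSL_R : ∑ j, (c j).l (Function.update t J (2 * t J + 1) j) = SL + (LL + G) := by
      rw [hsuml3]
      have h2 : (c J).l (2 * t J + 1) = P + (LL + G) := by
        rw [hgap_raw, hLL]
        have := hle2
        linarith
      rw [h2]; ring
    have hSR_R : ∑ j, (c j).r (Function.update t J (2 * t J + 1) j) = SR := by
      rw [hsumr3, hre2]; ring_nf
    -- generic descend
    have descend : ∀ u : ℕ, (u = 2 * t J ∨ u = 2 * t J + 1) →
        ((∑ j, (c j).l (Function.update t J u j)) ≤ s) →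
        (s ≤ ∑ j, (c j).r (Function.update t J u j)) →
        (∀ k, 1 ≤ (c k).BB δ (Function.update t J u k) →
          x J / (x J + 1) * min (s - ∑ i', (c i').l (Function.update t J u i'))
            (min ((∑ i', (c i').r (Function.update t J u i')) - s)
              ((x k + 1) / (2 * x k + 1) *
                ((c k).r (Function.update t J u k) - (c k).l (Function.update t J u k))))
            ≤ (c J).r u - (c J).l u) →
        ∃ f : Fin n → ℝ, s = ∑ j, f j ∧ ∀ j,
          ((c j).l (t j) ≤ f j ∧ f j ≤ (c j).r (t j)) ∧
          ∀ m, 1 ≤ m → Anc (t j) m → δ < (c j).gapLen m →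
            f j ∉ Set.Ioo ((c j).r (2 * m)) ((c j).l (2 * m + 1)) := by
      intro u hu hbox1 hbox2 hKey
      have hu1 : 1 ≤ u := by rcases hu with h | h <;> omega
      have hchild : (c J).l (t J) ≤ (c J).l u ∧ (c J).r u ≤ (c J).r (t J) := by
        rcases hu with h | h
        · subst h; exact ⟨hcb.1, hcb.2.1⟩
        · subst h; exact ⟨hcb.2.2.1, hcb.2.2.2⟩
      have ht'1 : ∀ j, 1 ≤ Function.update t J u j := by
        intro j
        by_cases hj : j = J
        · subst hj; rw [Function.update_self]; exact hu1
        · rw [Function.update_of_ne hj]; exact ht j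
      have hμ' : (∑ j, (c j).BB δ (Function.update t J u j)) ≤ μ := by
        have hsn := sum_update_nat (fun j v => (c j).BB δ v) t J u
        have hBBu : (c J).BB δ u ≤ (c J).BB δ (t J) - 1 :=
          (c J).BB_child hδ hi1 hJbig hu
        omega
      have hl_mono : SL ≤ ∑ j, (c j).l (Function.update t J u j) := by
        have hh := sum_update_real (fun j v => (c j).l v) t J u
        rw [hh]
        have := hchild.1
        linarith
      have hr_mono : (∑ j, (c j).r (Function.update t J u j)) ≤ SR := by
        have hh := sum_update_real (fun j v => (c j).r v) t J u
        rw [hh]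
        have := hchild.2
        linarith
      have hlen'le : ∀ k, (c k).r (Function.update t J u k) - (c k).l (Function.update t J u k)
          ≤ (c k).r (t k) - (c k).l (t k) := by
        intro k
        by_cases hk : k = J
        · subst hk; rw [Function.update_self]; linarith [hchild.1, hchild.2]
        · rw [Function.update_of_ne hk]
      have hUF' : ∀ j k, 1 ≤ (c k).BB δ (Function.update t J u k) →
          x j / (x j + 1) * min (s - ∑ i', (c i').l (Function.update t J u i'))
            (min ((∑ i', (c i').r (Function.update t J u i')) - s)
              ((x k + 1) / (2 * x k + 1) *
                ((c k).r (Function.update t J u k) - (c k).l (Function.update t J u k))))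
            ≤ (c j).r (Function.update t J u j) - (c j).l (Function.update t J u j) := by
        intro j k hk
        by_cases hj : j = J
        · subst hj; rw [Function.update_self]; exact hKey k hk
        · rw [Function.update_of_ne hj]
          have hkold : 1 ≤ (c k).BB δ (t k) := by
            by_cases hkJ : k = J
            · subst hkJ; exact hJbig
            · rwa [Function.update_of_ne hkJ] at hk
          have hccknn : (0:ℝ) ≤ (x k + 1) / (2 * x k + 1) := by
            have := hx k
            apply le_of_lt (div_pos (by linarith) (by linarith))
          have hmin_le : min (s - ∑ i', (c i').l (Function.update t J u i'))
              (min ((∑ i', (c i').r (Function.update t J u i')) - s)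
                ((x k + 1) / (2 * x k + 1) *
                  ((c k).r (Function.update t J u k) - (c k).l (Function.update t J u k))))
              ≤ min (s - SL) (min (SR - s)
                ((x k + 1) / (2 * x k + 1) * ((c k).r (t k) - (c k).l (t k)))) := by
            apply min_le_min (by linarith [hl_mono])
            apply min_le_min (by linarith [hr_mono])
            exact mul_le_mul_of_nonneg_left (hlen'le k) hccknn
          have hajnn : (0:ℝ) ≤ x j / (x j + 1) := by
            have := hx j
            apply le_of_lt (div_pos (by linarith) (by linarith))
          exact le_trans (mul_le_mul_of_nonneg_left hmin_le hajnn) (hUF j k hkold)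
      obtain ⟨f, hf1, hf2⟩ := ih (Function.update t J u) s ht'1 hμ' hbox1 hbox2 hUF'
      refine ⟨f, hf1, fun j => ?_⟩
      by_cases hj : j = J
      · have hfj := hf2 J
        rw [Function.update_self] at hfj
        rw [hj]
        exact ⟨⟨le_trans hchild.1 hfj.1.1, le_trans hfj.1.2 hchild.2⟩,
          (c J).avoid_lift hi1 hu hfj.1.1 hfj.1.2 hfj.2⟩
      · have hfj := hf2 j
        rw [Function.update_of_ne hj] at hfj
        exact hfj
    -- nonnegativity of a_J
    have hajn : (0:ℝ) ≤ x J / (x J + 1) := le_of_lt (div_pos hxJ hxJ1)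
    -- case analysis
    by_cases hmL : G + LR ≤ SR - s
    · by_cases hmR : LL + G ≤ s - SL
      · -- both children available : take the bigger one
        have hckbound : ∀ u' : ℕ, (u' = 2 * t J ∨ u' = 2 * t J + 1) →
            ∀ k, 1 ≤ (c k).BB δ (Function.update t J u' k) →
            (x k + 1) / (2 * x k + 1) *
                ((c k).r (Function.update t J u' k) - (c k).l (Function.update t J u' k))
              ≤ (x J + 1) / (2 * x J + 1) * (Q - P) := by
          intro u' hu' k hk
          by_cases hkJ : k = J
          · subst hkJ
            rw [Function.update_self]
            apply mul_le_mul_of_nonneg_left _ hccpos.le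
            rcases hu' with h | h
            · subst h; rw [← hLL]; linarith [hG, (c k).len_pos (show 1 ≤ 2 * t k + 1 by omega)]
            · subst h; rw [← hLR]; linarith [hG, (c k).len_pos (show 1 ≤ 2 * t k by omega)]
          · rw [Function.update_of_ne hkJ]
            have hkmem : k ∈ BIGS := by
              rw [hBIGS, Finset.mem_filter]
              refine ⟨Finset.mem_univ k, ?_⟩
              rwa [Function.update_of_ne hkJ] at hk
            exact hJmax k hkmem
        by_cases hLRLL : LR ≤ LL
        · -- left child is the bigger one
          apply descend (2 * t J) (Or.inl rfl)
          · rw [hSL_L]; exact hsl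
          · rw [hSR_L]; linarith
          · intro k hk
            have hmin : min (s - ∑ i', (c i').l (Function.update t J (2 * t J) i'))
                (min ((∑ i', (c i').r (Function.update t J (2 * t J) i')) - s)
                  ((x k + 1) / (2 * x k + 1) *
                    ((c k).r (Function.update t J (2 * t J) k)
                      - (c k).l (Function.update t J (2 * t J) k))))
                ≤ (x J + 1) / (2 * x J + 1) * (Q - P) :=
              le_trans (le_trans (min_le_right _ _) (min_le_right _ _))
                (hckbound (2 * t J) (Or.inl rfl) k hk)
            refine le_trans (mul_le_mul_of_nonneg_left hmin hajn) ?_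
            rw [← hLL]
            have he : x J / (x J + 1) * ((x J + 1) / (2 * x J + 1) * (Q - P))
                = x J * (Q - P) / (2 * x J + 1) := by field_simp
            rw [he, div_le_iff₀ hxJ2]
            exact bigger_child_bound hxJ2 hgl (by linarith [hQPsplit]) hLRLL
        · -- right child is the bigger one
          push_neg at hLRLL
          apply descend (2 * t J + 1) (Or.inr rfl)
          · rw [hSL_R]; linarith
          · rw [hSR_R]; exact hsr
          · intro k hk
            have hmin : min (s - ∑ i', (c i').l (Function.update t J (2 * t J + 1) i'))
                (min ((∑ i', (c i').r (Function.update t J (2 * t J + 1) i')) - s)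
                  ((x k + 1) / (2 * x k + 1) *
                    ((c k).r (Function.update t J (2 * t J + 1) k)
                      - (c k).l (Function.update t J (2 * t J + 1) k))))
                ≤ (x J + 1) / (2 * x J + 1) * (Q - P) :=
              le_trans (le_trans (min_le_right _ _) (min_le_right _ _))
                (hckbound (2 * t J + 1) (Or.inr rfl) k hk)
            refine le_trans (mul_le_mul_of_nonneg_left hmin hajn) ?_
            rw [← hLR]
            have he : x J / (x J + 1) * ((x J + 1) / (2 * x J + 1) * (Q - P))
                = x J * (Q - P) / (2 * x J + 1) := by field_simp
            rw [he, div_le_iff₀ hxJ2]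
            exact bigger_child_bound hxJ2 hgl (by linarith [hQPsplit]) hLRLL.le
      · -- forced left : σ < LL + G
        push_neg at hmR
        apply descend (2 * t J) (Or.inl rfl)
        · rw [hSL_L]; exact hsl
        · rw [hSR_L]; linarith
        · intro k _
          have hmin : min (s - ∑ i', (c i').l (Function.update t J (2 * t J) i'))
              (min ((∑ i', (c i').r (Function.update t J (2 * t J) i')) - s)
                ((x k + 1) / (2 * x k + 1) *
                  ((c k).r (Function.update t J (2 * t J) k)
                    - (c k).l (Function.update t J (2 * t J) k))))
              ≤ s - SL := by
            rw [hSL_L] at *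
            exact min_le_left _ _
          refine le_trans (mul_le_mul_of_nonneg_left hmin hajn) ?_
          rw [← hLL]
          exact forced_child_bound hxJ hσ hLLx hmR
    · -- forced right : ρ < G + LR
      push_neg at hmL
      have hmR : LL + G ≤ s - SL := by
        rcases hstuck with h | h
        · linarith
        · exact h
      apply descend (2 * t J + 1) (Or.inr rfl)
      · rw [hSL_R]; linarith
      · rw [hSR_R]; exact hsr
      · intro k _
        have hmin : min (s - ∑ i', (c i').l (Function.update t J (2 * t J + 1) i'))
            (min ((∑ i', (c i').r (Function.update t J (2 * t J + 1) i')) - s)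
              ((x k + 1) / (2 * x k + 1) *
                ((c k).r (Function.update t J (2 * t J + 1) k)
                  - (c k).l (Function.update t J (2 * t J + 1) k))))
            ≤ SR - s := by
          rw [hSR_R] at *
          exact le_trans (min_le_right _ _) (min_le_left _ _)
        refine le_trans (mul_le_mul_of_nonneg_left hmin hajn) ?_
        rw [← hLR]
        exact forced_child_bound hxJ hρ hLRx (by linarith)

set_option maxHeartbeats 1000000 in
theorem interval_sum_eq_cantor_sum (n : ℕ) (hn : 2 ≤ n)
    (c : Fin n → CantorConstr) (x : Fin n → ℝ)
    (hx : ∀ j, 0 < x j)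
    (hd : ∀ j, (c j).densityGE (x j))
    (h1 : (∑ j, x j / (x j + 1)) ≥ 1)
    (h2 : ∀ j k, (c j).r 1 - (c j).l 1 ≥
      x j / (x j + 1) * ((x k + 1) / (2 * x k + 1) * ((c k).r 1 - (c k).l 1))) :
    {s : ℝ | ∃ f : Fin n → ℝ, (∀ j, f j ∈ Set.Icc ((c j).l 1) ((c j).r 1)) ∧ s = ∑ j, f j} =
      {s : ℝ | ∃ f : Fin n → ℝ, (∀ j, f j ∈ (c j).cantorSet) ∧ s = ∑ j, f j} := by
  ext s
  simp only [Set.mem_setOf_eq]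
  constructor
  · rintro ⟨f₀, hf₀b, hf₀s⟩
    have hsl : (∑ j, (c j).l 1) ≤ s := by
      rw [hf₀s]
      exact Finset.sum_le_sum (fun j _ => (Set.mem_Icc.1 (hf₀b j)).1)
    have hsr : s ≤ ∑ j, (c j).r 1 := by
      rw [hf₀s]
      exact Finset.sum_le_sum (fun j _ => (Set.mem_Icc.1 (hf₀b j)).2)
    -- approximate solutions
    have key : ∀ T : ℕ, ∃ y : Fin n → ℝ, (∀ j, y j ∈ (c j).cantorSet) ∧
        |(∑ j, y j) - s| ≤ (n : ℝ) * (1 / ((T : ℝ) + 1)) := by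
      intro T
      set δ := (1 : ℝ) / ((T : ℝ) + 1) with hδdef
      have hδ : 0 < δ := by positivity
      have hUF0 : ∀ j k, 1 ≤ (c k).BB δ ((fun _ : Fin n => 1) k) →
          x j / (x j + 1) * min (s - ∑ i, (c i).l ((fun _ : Fin n => 1) i))
            (min ((∑ i, (c i).r ((fun _ : Fin n => 1) i)) - s)
              ((x k + 1) / (2 * x k + 1) *
                ((c k).r ((fun _ : Fin n => 1) k) - (c k).l ((fun _ : Fin n => 1) k))))
          ≤ (c j).r ((fun _ : Fin n => 1) j) - (c j).l ((fun _ : Fin n => 1) j) := by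
        intro j k _
        have hajn : (0:ℝ) ≤ x j / (x j + 1) := by
          have := hx j
          exact le_of_lt (div_pos (by linarith) (by linarith))
        have hmin : min (s - ∑ i, (c i).l 1)
            (min ((∑ i, (c i).r 1) - s)
              ((x k + 1) / (2 * x k + 1) * ((c k).r 1 - (c k).l 1)))
            ≤ (x k + 1) / (2 * x k + 1) * ((c k).r 1 - (c k).l 1) :=
          le_trans (min_le_right _ _) (min_le_right _ _)
        exact le_trans (mul_le_mul_of_nonneg_left hmin hajn) (h2 j k)
      obtain ⟨f, hfsum, hf⟩ := core_lemma c x hx hd h1 hδ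
        (∑ j, (c j).BB δ 1) (fun _ => 1) s (fun _ => le_rfl) le_rfl hsl hsr hUF0
      have hclose : ∀ j, ∃ y ∈ (c j).cantorSet, |f j - y| ≤ δ := by
        intro j
        apply (c j).close_to_cantor hδ (Set.mem_Icc.2 (hf j).1)
        intro m hm hbig
        exact (hf j).2 m hm (anc_one hm) hbig
      choose y hy1 hy2 using hclose
      refine ⟨y, hy1, ?_⟩
      have hdiff : (∑ j, y j) - s = ∑ j, (y j - f j) := by
        rw [hfsum, Finset.sum_sub_distrib]
      rw [hdiff]
      calc |∑ j, (y j - f j)| ≤ ∑ j, |y j - f j| := Finset.abs_sum_le_sum_abs _ _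
        _ ≤ ∑ _j : Fin n, δ := by
            apply Finset.sum_le_sum
            intro j _
            rw [abs_sub_comm]
            exact hy2 j
        _ = (n : ℝ) * δ := by
            rw [Finset.sum_const, Finset.card_univ, Fintype.card_fin, nsmul_eq_mul]
    choose Y hY1 hY2 using key
    -- compactness
    have hCc : ∀ j, IsCompact ((c j).cantorSet) := by
      intro j
      have hclosed : IsClosed ((c j).cantorSet) := by
        apply IsClosed.sdiff isClosed_Icc
        apply isOpen_iUnion
        intro i
        apply isOpen_iUnion
        intro _
        exact isOpen_Ioo
      exact IsCompact.of_isClosed_subset isCompact_Icc hclosed Set.diff_subset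
    have hKpi : IsCompact (Set.univ.pi fun j : Fin n => (c j).cantorSet) :=
      isCompact_univ_pi hCc
    have hmemK : ∀ T, Y T ∈ Set.univ.pi fun j : Fin n => (c j).cantorSet := by
      intro T
      rw [Set.mem_univ_pi]
      exact hY1 T
    obtain ⟨g, hg, φ, hφ, hconv⟩ := hKpi.tendsto_subseq hmemK
    have hcomp : ∀ j, Filter.Tendsto (fun i => Y (φ i) j) Filter.atTop (nhds (g j)) := by
      intro j
      exact (tendsto_pi_nhds.1 hconv) j
    have h1lim : Filter.Tendsto (fun i => ∑ j, Y (φ i) j) Filter.atTop (nhds (∑ j, g j)) :=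
      tendsto_finset_sum _ (fun j _ => hcomp j)
    have he0 : Filter.Tendsto (fun i : ℕ => (n : ℝ) * (1 / ((i : ℝ) + 1)))
        Filter.atTop (nhds 0) := by
      have hb := tendsto_one_div_add_atTop_nhds_zero_nat (𝕜 := ℝ)
      have := hb.const_mul (n : ℝ)
      simpa using this
    have hb : ∀ i : ℕ, ‖(∑ j, Y (φ i) j) - s‖ ≤ (n : ℝ) * (1 / ((i : ℝ) + 1)) := by
      intro i
      rw [Real.norm_eq_abs]
      refine le_trans (hY2 (φ i)) ?_
      have hφi : (i : ℝ) ≤ (φ i : ℝ) := by exact_mod_cast hφ.le_apply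
      have h1' : (0:ℝ) < (i : ℝ) + 1 := by positivity
      have h2' : (0:ℝ) < (φ i : ℝ) + 1 := by positivity
      apply mul_le_mul_of_nonneg_left _ (by positivity : (0:ℝ) ≤ (n:ℝ))
      exact one_div_le_one_div_of_le h1' (by linarith)
    have h0 : Filter.Tendsto (fun i => (∑ j, Y (φ i) j) - s) Filter.atTop (nhds 0) :=
      squeeze_zero_norm hb he0
    have h2lim : Filter.Tendsto (fun i => ∑ j, Y (φ i) j) Filter.atTop (nhds s) := by
      have := h0.add (tendsto_const_nhds (x := s))
      simpa using this
    have hgs : ∑ j, g j = s := tendsto_nhds_unique h1lim h2lim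
    refine ⟨g, fun j => ?_, hgs.symm⟩
    exact hg j (Set.mem_univ j)
  · rintro ⟨f, hf, hfs⟩
    refine ⟨f, fun j => ?_, hfs⟩
    exact (hf j).1
end
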